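/- arXiv:2112.13594 — 2 statements merged into one kernel-verified Lean document; each statement's English description precedes it below -/
import Mathlib

section
/- Let P̃ be the universal guessing distribution on 𝒳̂^n. Then lim_{n→∞} max_{x ∈ 𝒳^n} | (1/n) log₂ P̃[S(x)] + R(D, P̂_x) | = 0; that is, uniformly in x ∈ 𝒳^n, the probability P̃[S(x)] = Σ_{x̂ ∈ S(x)} P̃(x̂) equals 2^{−n R(D, P̂_x)} up to factors that are sub-exponential in n. -/
open scoped BigOperators Classical
open Filter

section Defs

/-- A probability mass function on a finite alphabet. -/
def IsPMF {α : Type*} [Fintype α] (p : α → ℝ) : Prop :=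
  (∀ a, 0 ≤ p a) ∧ ∑ a, p a = 1

/-- A conditional probability mass function (a channel / test channel). -/
def IsCondPMF {α β : Type*} [Fintype α] [Fintype β] (W : α → β → ℝ) : Prop :=
  ∀ a, IsPMF (W a)

/-- Base-2 Kullback–Leibler divergence `D(Q‖P)`. -/
noncomputable def klDiv2 {α : Type*} [Fintype α] (Q P : α → ℝ) : ℝ :=
  ∑ a, Q a * Real.logb 2 (Q a / P a)

/-- Base-2 mutual information `I(X;X̂)` of the joint law `Q(a) W(b|a)`. -/
noncomputable def mutInf2 {α β : Type*} [Fintype α] [Fintype β]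
    (Q : α → ℝ) (W : α → β → ℝ) : ℝ :=
  ∑ a, ∑ b, Q a * W a b * Real.logb 2 (W a b / (∑ a', Q a' * W a' b))

/-- The rate–distortion function `R(D,Q)` (base 2). -/
noncomputable def RD {X Xh : Type*} [Fintype X] [Fintype Xh]
    (d : X → Xh → ℝ) (D : ℝ) (Q : X → ℝ) : ℝ :=
  sInf { r | ∃ V : X → Xh → ℝ, IsCondPMF V ∧
    (∑ x, ∑ xh, Q x * V x xh * d x xh) ≤ D ∧ r = mutInf2 Q V }

/-- Empirical distribution of a sequence. -/
noncomputable def empDist {X : Type*} [Fintype X] {n : ℕ} (x : Fin n → X) : X → ℝ :=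
  fun a => ((Finset.univ.filter (fun i => x i = a)).card : ℝ) / n

/-- Base-2 empirical entropy of a sequence. -/
noncomputable def empEnt {X : Type*} [Fintype X] {n : ℕ} (x : Fin n → X) : ℝ :=
  - ∑ a, empDist x a * Real.logb 2 (empDist x a)

/-- Additive (per-block) distortion between sequences. -/
noncomputable def dSeq {X Xh : Type*} {n : ℕ} (d : X → Xh → ℝ)
    (x : Fin n → X) (xh : Fin n → Xh) : ℝ :=
  ∑ i, d (x i) (xh i)

/-- The universal guessing distribution `P̃(x̂) ∝ 2^{-n Ĥ_x̂}` on `𝒳̂ⁿ`. -/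
noncomputable def univDist {Xh : Type*} [Fintype Xh] {n : ℕ} (xh : Fin n → Xh) : ℝ :=
  (2 : ℝ) ^ (-(n : ℝ) * empEnt xh) / ∑ z : Fin n → Xh, (2 : ℝ) ^ (-(n : ℝ) * empEnt z)

/-- Probability of the distortion ball `S(x)` under the universal distribution. -/
noncomputable def univDistBall {X Xh : Type*} [Fintype Xh] {n : ℕ}
    (d : X → Xh → ℝ) (D : ℝ) (x : Fin n → X) : ℝ :=
  ∑ xh ∈ Finset.univ.filter (fun xh : Fin n → Xh => dSeq d x xh ≤ (n : ℝ) * D), univDist xh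

end Defs

open Finset

set_option linter.unusedSectionVars false
set_option linter.unusedVariables false


section AuxReal

lemma logb2_le_sub_one_div {x : ℝ} (hx : 0 < x) :
    Real.logb 2 x ≤ (x - 1) / Real.log 2 := by
  rw [Real.logb]
  exact div_le_div_of_nonneg_right (Real.log_le_sub_one_of_pos hx) (Real.log_pos one_lt_two).le

lemma kl_aux {β : Type*} [Fintype β] (p q : β → ℝ)
    (hp : ∀ b, 0 ≤ p b) (hq : ∀ b, 0 ≤ q b) (habs : ∀ b, 0 < p b → 0 < q b)
    (hps : ∑ b, p b = 1) (hqs : ∑ b, q b ≤ 1) :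
    ∑ b, p b * Real.logb 2 (q b / p b) ≤ 0 := by
  have h1 : ∀ b, p b * Real.logb 2 (q b / p b) ≤ (q b - p b) / Real.log 2 := by
    intro b
    rcases eq_or_lt_of_le (hp b) with h | h
    · rw [← h, sub_zero, zero_mul]
      exact div_nonneg (hq b) (Real.log_pos one_lt_two).le
    · have hqb := habs b h
      have hlog : Real.logb 2 (q b / p b) ≤ (q b / p b - 1) / Real.log 2 :=
        logb2_le_sub_one_div (by positivity)
      calc p b * Real.logb 2 (q b / p b) ≤ p b * ((q b / p b - 1) / Real.log 2) := by
            exact mul_le_mul_of_nonneg_left hlog (le_of_lt h)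
        _ = (q b - p b) / Real.log 2 := by
            field_simp
  calc ∑ b, p b * Real.logb 2 (q b / p b) ≤ ∑ b, (q b - p b) / Real.log 2 :=
        Finset.sum_le_sum fun b _ => h1 b
    _ = ((∑ b, q b) - 1) / Real.log 2 := by rw [← Finset.sum_div, Finset.sum_sub_distrib, hps]
    _ ≤ 0 := by
        apply div_nonpos_of_nonpos_of_nonneg
        · linarith
        · exact le_of_lt (Real.log_pos one_lt_two)

lemma kl_nonneg {β : Type*} [Fintype β] (p q : β → ℝ)
    (hp : ∀ b, 0 ≤ p b) (hq : ∀ b, 0 ≤ q b) (habs : ∀ b, 0 < p b → 0 < q b)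
    (hps : ∑ b, p b = 1) (hqs : ∑ b, q b ≤ 1) :
    0 ≤ ∑ b, p b * Real.logb 2 (p b / q b) := by
  have : ∑ b, p b * Real.logb 2 (p b / q b) = - ∑ b, p b * Real.logb 2 (q b / p b) := by
    rw [← Finset.sum_neg_distrib]
    apply Finset.sum_congr rfl
    intro b _
    rcases eq_or_lt_of_le (hp b) with h | h
    · rw [← h]; ring
    · have hqb := habs b h
      have : p b / q b = (q b / p b)⁻¹ := by field_simp
      rw [this, Real.logb_inv]; ring
  rw [this]
  have := kl_aux p q hp hq habs hps hqs
  linarith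

lemma gibbs2 {β : Type*} [Fintype β] (p q : β → ℝ)
    (hp : ∀ b, 0 ≤ p b) (hq : ∀ b, 0 < q b)
    (hps : ∑ b, p b = 1) (hqs : ∑ b, q b ≤ 1) :
    ∑ b, p b * Real.logb 2 (q b) ≤ ∑ b, p b * Real.logb 2 (p b) := by
  have h := kl_aux p q hp (fun b => le_of_lt (hq b)) (fun b _ => hq b) hps hqs
  have he : ∑ b, p b * Real.logb 2 (q b / p b)
      = ∑ b, p b * Real.logb 2 (q b) - ∑ b, p b * Real.logb 2 (p b) := by
    rw [← Finset.sum_sub_distrib]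
    apply Finset.sum_congr rfl
    intro b _
    rcases eq_or_lt_of_le (hp b) with h | h
    · rw [← h]; ring
    · rw [Real.logb_div (ne_of_gt (hq b)) (ne_of_gt h)]; ring
  linarith

lemma mul_logb_sq_le {t : ℝ} (h0 : 0 ≤ t) (h1 : t ≤ 1) :
    t * (Real.logb 2 t) ^ 2 ≤ 4 / (Real.log 2) ^ 2 := by
  have hl2 : (0:ℝ) < Real.log 2 := Real.log_pos one_lt_two
  rcases eq_or_lt_of_le h0 with h | h
  · rw [← h, zero_mul]; positivity
  · have key : t * (Real.log t) ^ 2 ≤ 4 := by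
      have hlt : Real.log t = - Real.log t⁻¹ := by rw [Real.log_inv]; ring
      have hinv : (1:ℝ) ≤ t⁻¹ := (one_le_inv₀ h).mpr h1
      have h2 : Real.log t⁻¹ ≤ 2 * Real.sqrt t⁻¹ := by
        have : Real.log t⁻¹ = 2 * Real.log (Real.sqrt t⁻¹) := by
          rw [Real.log_sqrt (by positivity)]; ring
        rw [this]
        have := Real.log_le_sub_one_of_pos (x := Real.sqrt t⁻¹) (by positivity)
        nlinarith [Real.sqrt_nonneg t⁻¹]
      have hsq : (Real.log t⁻¹)^2 ≤ 4 * t⁻¹ := by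
        have hnn : 0 ≤ Real.log t⁻¹ := Real.log_nonneg hinv
        have h4 : (Real.log t⁻¹)^2 ≤ (2 * Real.sqrt t⁻¹)^2 := by nlinarith
        have : (2 * Real.sqrt t⁻¹)^2 = 4 * t⁻¹ := by
          rw [mul_pow, Real.sq_sqrt (by positivity)]; ring
        linarith [h4, this.le, this.ge]
      have : (Real.log t)^2 = (Real.log t⁻¹)^2 := by rw [hlt]; ring
      rw [this]
      calc t * (Real.log t⁻¹)^2 ≤ t * (4 * t⁻¹) := by
            exact mul_le_mul_of_nonneg_left hsq h0
        _ = 4 := by field_simp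
    have : (Real.logb 2 t)^2 = (Real.log t)^2 / (Real.log 2)^2 := by
      rw [Real.logb]; ring
    rw [this]
    rw [mul_div_assoc']
    gcongr

end AuxReal

section AuxFiber

variable {ι β : Type*} [Fintype ι] [Fintype β]

/-- Product over indices grouped by value of `y`. -/
lemma prod_comp_eq_prod_pow (y : ι → β) (f : β → ℝ) :
    ∏ i, f (y i) = ∏ b, f b ^ (univ.filter fun i => y i = b).card := by
  rw [← Finset.prod_fiberwise_of_maps_to (fun i _ => Finset.mem_univ (y i)) (fun i => f (y i))]
  apply Finset.prod_congr rfl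
  intro b _
  rw [← Finset.prod_const]
  apply Finset.prod_congr rfl
  intro i hi
  rw [(Finset.mem_filter.mp hi).2]

/-- Sum over indices grouped by value of `y`. -/
lemma sum_comp_eq_sum_card (y : ι → β) (g : β → ℝ) :
    ∑ i, g (y i) = ∑ b, ((univ.filter fun i => y i = b).card : ℝ) * g b := by
  rw [← Finset.sum_fiberwise_of_maps_to (fun i _ => Finset.mem_univ (y i)) (fun i => g (y i))]
  apply Finset.sum_congr rfl
  intro b _
  rw [Finset.sum_congr rfl (fun i hi => by rw [(Finset.mem_filter.mp hi).2] : ∀ i ∈ univ.filter fun i => y i = b, g (y i) = g b), Finset.sum_const, nsmul_eq_mul]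

lemma sum_card_fiber (y : ι → β) :
    ∑ b, (univ.filter fun i => y i = b).card = Fintype.card ι := by
  rw [← Finset.card_univ, Finset.card_eq_sum_card_fiberwise (fun i _ => Finset.mem_univ (y i))]

end AuxFiber

section AuxPi

variable {β : Type*} [Fintype β] {n : ℕ}

lemma sum_pi_prod (g : Fin n → β → ℝ) :
    ∑ z : Fin n → β, ∏ i, g i (z i) = ∏ i, ∑ b, g i b := by
  rw [Finset.prod_univ_sum]
  rw [Fintype.piFinset_univ]

lemma prod_ite_one_eq (j : Fin n) (f : β → ℝ) (z : Fin n → β) :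
    ∏ i, (if i = j then f (z i) else 1) = f (z j) := by
  rw [Finset.prod_ite_eq' univ j (fun i => f (z i))]
  simp

/-- Expectation of a single-coordinate function under a product measure. -/
lemma exp_coord (w : Fin n → β → ℝ) (hw : ∀ i, ∑ b, w i b = 1) (j : Fin n) (f : β → ℝ) :
    ∑ z : Fin n → β, (∏ i, w i (z i)) * f (z j) = ∑ b, w j b * f b := by
  have key := sum_pi_prod (fun i b => w i b * (if i = j then f b else 1))
  have h1 : ∀ z : Fin n → β, (∏ i, (w i (z i) * (if i = j then f (z i) else 1)))
      = (∏ i, w i (z i)) * f (z j) := by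
    intro z
    rw [Finset.prod_mul_distrib, prod_ite_one_eq j f z]
  have h2 : (∏ i, ∑ b, w i b * (if i = j then f b else 1)) = ∑ b, w j b * f b := by
    have : ∀ i, (∑ b, w i b * (if i = j then f b else 1))
        = (if i = j then (∑ b, w j b * f b) else 1) := by
      intro i
      by_cases hij : i = j
      · subst hij; simp
      · simp [hij, hw i]
    rw [Finset.prod_congr rfl (fun i _ => this i)]
    rw [Finset.prod_ite_eq' univ j (fun _ => ∑ b, w j b * f b)]
    simp
  rw [← h2, ← key]
  apply Finset.sum_congr rfl
  intro z _
  exact (h1 z).symm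

/-- Expectation of a product of two single-coordinate functions, distinct coordinates. -/
lemma exp_coord_two (w : Fin n → β → ℝ) (hw : ∀ i, ∑ b, w i b = 1) {j k : Fin n}
    (hjk : j ≠ k) (f g : β → ℝ) :
    ∑ z : Fin n → β, (∏ i, w i (z i)) * (f (z j) * g (z k))
      = (∑ b, w j b * f b) * (∑ b, w k b * g b) := by
  have key := sum_pi_prod (fun i b => w i b * ((if i = j then f b else 1) * (if i = k then g b else 1)))
  have h1 : ∀ z : Fin n → β,
      (∏ i, (w i (z i) * ((if i = j then f (z i) else 1) * (if i = k then g (z i) else 1))))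
      = (∏ i, w i (z i)) * (f (z j) * g (z k)) := by
    intro z
    rw [Finset.prod_mul_distrib, Finset.prod_mul_distrib, prod_ite_one_eq j f z,
      prod_ite_one_eq k g z]
  have h2 : (∏ i, ∑ b, w i b * ((if i = j then f b else 1) * (if i = k then g b else 1)))
      = (∑ b, w j b * f b) * (∑ b, w k b * g b) := by
    have : ∀ i, (∑ b, w i b * ((if i = j then f b else 1) * (if i = k then g b else 1)))
        = (if i = j then (∑ b, w j b * f b) else 1) * (if i = k then (∑ b, w k b * g b) else 1) := by
      intro i
      by_cases hij : i = j
      · subst hij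
        simp [hjk]
      · by_cases hik : i = k
        · subst hik; simp [hij]
        · simp [hij, hik, hw i]
    rw [Finset.prod_congr rfl (fun i _ => this i), Finset.prod_mul_distrib]
    rw [Finset.prod_ite_eq' univ j (fun _ => ∑ b, w j b * f b),
      Finset.prod_ite_eq' univ k (fun _ => ∑ b, w k b * g b)]
    simp
  rw [← h2, ← key]
  apply Finset.sum_congr rfl
  intro z _
  exact (h1 z).symm

/-- Total mass of a product measure with rows summing to 1. -/
lemma sum_pi_prod_one (w : Fin n → β → ℝ) (hw : ∀ i, ∑ b, w i b = 1) :
    ∑ z : Fin n → β, ∏ i, w i (z i) = 1 := by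
  rw [sum_pi_prod]
  rw [Finset.prod_congr rfl (fun i _ => hw i)]
  simp

/-- Variance of a sum of independent coordinate functions. -/
lemma var_sum_coords (w : Fin n → β → ℝ) (hw : ∀ i, ∑ b, w i b = 1) (ℓ : Fin n → β → ℝ) :
    ∑ z : Fin n → β, (∏ i, w i (z i)) * (∑ i, (ℓ i (z i) - ∑ b, w i b * ℓ i b)) ^ 2
      = ∑ i, ∑ b, w i b * (ℓ i b - ∑ b', w i b' * ℓ i b') ^ 2 := by
  set c : Fin n → β → ℝ := fun i b => ℓ i b - ∑ b', w i b' * ℓ i b' with hc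
  have hzero : ∀ i, ∑ b, w i b * c i b = 0 := by
    intro i
    simp only [hc, mul_sub, Finset.sum_sub_distrib, ← Finset.sum_mul, hw i, one_mul]
    ring
  have expand : ∀ z : Fin n → β, (∑ i, c i (z i)) ^ 2 = ∑ i, ∑ j, c i (z i) * c j (z j) := by
    intro z
    rw [sq, Finset.sum_mul_sum]
  calc ∑ z : Fin n → β, (∏ i, w i (z i)) * (∑ i, c i (z i)) ^ 2
      = ∑ z : Fin n → β, ∑ i, ∑ j, (∏ t, w t (z t)) * (c i (z i) * c j (z j)) := by
        apply Finset.sum_congr rfl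
        intro z _
        rw [expand z, Finset.mul_sum]
        apply Finset.sum_congr rfl
        intro i _
        rw [Finset.mul_sum]
    _ = ∑ i, ∑ j, ∑ z : Fin n → β, (∏ t, w t (z t)) * (c i (z i) * c j (z j)) := by
        rw [Finset.sum_comm]
        apply Finset.sum_congr rfl
        intro i _
        rw [Finset.sum_comm]
    _ = ∑ i, ∑ b, w i b * (c i b) ^ 2 := by
        apply Finset.sum_congr rfl
        intro i _
        rw [Finset.sum_eq_single i]
        · have := exp_coord w hw i (fun b => (c i b) ^ 2)
          rw [← this]
          apply Finset.sum_congr rfl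
          intro z _
          ring_nf
        · intro j _ hji
          rw [exp_coord_two w hw (Ne.symm hji) (c i) (c j), hzero i, zero_mul]
        · intro h
          exact absurd (Finset.mem_univ i) h

end AuxPi

section AuxProb

variable {α : Type*} [Fintype α]

/-- Finite Markov inequality. -/
lemma finset_markov (μ Y : α → ℝ) (hμ : ∀ a, 0 ≤ μ a) (hY : ∀ a, 0 ≤ Y a)
    {t : ℝ} (ht : 0 < t) :
    ∑ a ∈ univ.filter (fun a => t < Y a), μ a ≤ (∑ a, μ a * Y a) / t := by
  rw [le_div_iff₀ ht]
  calc (∑ a ∈ univ.filter (fun a => t < Y a), μ a) * t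
      = ∑ a ∈ univ.filter (fun a => t < Y a), μ a * t := by rw [Finset.sum_mul]
    _ ≤ ∑ a ∈ univ.filter (fun a => t < Y a), μ a * Y a := by
        apply Finset.sum_le_sum
        intro a ha
        exact mul_le_mul_of_nonneg_left (le_of_lt (Finset.mem_filter.mp ha).2) (hμ a)
    _ ≤ ∑ a, μ a * Y a := by
        apply Finset.sum_le_sum_of_subset_of_nonneg (Finset.filter_subset _ _)
        intro a _ _
        exact mul_nonneg (hμ a) (hY a)

/-- If `Y ≥ 0` and `E[Y] ≤ 0`, the event `Y > 0` is null. -/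
lemma finset_markov_zero (μ Y : α → ℝ) (hμ : ∀ a, 0 ≤ μ a) (hY : ∀ a, 0 ≤ Y a)
    (hE : ∑ a, μ a * Y a ≤ 0) :
    ∑ a ∈ univ.filter (fun a => 0 < Y a), μ a ≤ 0 := by
  have hall : ∀ a, 0 < Y a → μ a = 0 := by
    intro a haY
    by_contra hne
    have hpos : 0 < μ a * Y a := mul_pos (lt_of_le_of_ne (hμ a) (Ne.symm hne)) haY
    have : 0 < ∑ a, μ a * Y a := by
      apply lt_of_lt_of_le hpos
      apply Finset.single_le_sum (f := fun a => μ a * Y a)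
        (fun a _ => mul_nonneg (hμ a) (hY a)) (Finset.mem_univ a)
    linarith
  apply le_of_eq
  apply Finset.sum_eq_zero
  intro a ha
  exact hall a (Finset.mem_filter.mp ha).2

/-- One-sided finite Chebyshev inequality. -/
lemma finset_chebyshev (μ L : α → ℝ) (hμ : ∀ a, 0 ≤ μ a) {m t : ℝ} (ht : 0 < t) :
    ∑ a ∈ univ.filter (fun a => m + t < L a), μ a ≤ (∑ a, μ a * (L a - m) ^ 2) / t ^ 2 := by
  rw [le_div_iff₀ (by positivity)]
  calc (∑ a ∈ univ.filter (fun a => m + t < L a), μ a) * t ^ 2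
      = ∑ a ∈ univ.filter (fun a => m + t < L a), μ a * t ^ 2 := by rw [Finset.sum_mul]
    _ ≤ ∑ a ∈ univ.filter (fun a => m + t < L a), μ a * (L a - m) ^ 2 := by
        apply Finset.sum_le_sum
        intro a ha
        have h := (Finset.mem_filter.mp ha).2
        have : t ^ 2 ≤ (L a - m) ^ 2 := by nlinarith
        exact mul_le_mul_of_nonneg_left this (hμ a)
    _ ≤ ∑ a, μ a * (L a - m) ^ 2 := by
        apply Finset.sum_le_sum_of_subset_of_nonneg (Finset.filter_subset _ _)
        intro a _ _
        exact mul_nonneg (hμ a) (sq_nonneg _)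

end AuxProb
section MutInf

variable {X Xh : Type*} [Fintype X] [Fintype Xh]

lemma IsPMF.le_one' {α : Type*} [Fintype α] {p : α → ℝ} (hp : IsPMF p) (a : α) : p a ≤ 1 := by
  rw [← hp.2]
  exact Finset.single_le_sum (fun b _ => hp.1 b) (Finset.mem_univ a)

lemma marg_sum_one {Q : X → ℝ} {W : X → Xh → ℝ} (hQ : IsPMF Q) (hW : IsCondPMF W) :
    ∑ b, ∑ a, Q a * W a b = 1 := by
  rw [Finset.sum_comm]
  calc ∑ a, ∑ b, Q a * W a b = ∑ a, Q a * ∑ b, W a b :=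
        Finset.sum_congr rfl fun a _ => (Finset.mul_sum _ _ _).symm
    _ = 1 := by
        rw [Finset.sum_congr rfl fun a _ => by rw [(hW a).2, mul_one]]
        exact hQ.2

lemma marg_nonneg {Q : X → ℝ} {W : X → Xh → ℝ} (hQ : IsPMF Q) (hW : IsCondPMF W) (b : Xh) :
    0 ≤ ∑ a, Q a * W a b :=
  Finset.sum_nonneg fun a _ => mul_nonneg (hQ.1 a) ((hW a).1 b)

lemma le_marg {Q : X → ℝ} {W : X → Xh → ℝ} (hQ : IsPMF Q) (hW : IsCondPMF W) (a : X) (b : Xh) :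
    Q a * W a b ≤ ∑ a', Q a' * W a' b :=
  Finset.single_le_sum (fun a' _ => mul_nonneg (hQ.1 a') ((hW a').1 b)) (Finset.mem_univ a)

lemma mutInf2_nonneg {Q : X → ℝ} {W : X → Xh → ℝ} (hQ : IsPMF Q) (hW : IsCondPMF W) :
    0 ≤ mutInf2 Q W := by
  unfold mutInf2
  apply Finset.sum_nonneg
  intro a _
  rcases eq_or_lt_of_le (hQ.1 a) with h | h
  · apply le_of_eq
    symm
    apply Finset.sum_eq_zero
    intro b _
    rw [← h]; ring
  · have key : 0 ≤ ∑ b, W a b * Real.logb 2 (W a b / (∑ a', Q a' * W a' b)) := by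
      apply kl_nonneg (W a) (fun b => ∑ a', Q a' * W a' b) (hW a).1 (marg_nonneg hQ hW)
      · intro b hb
        calc (0:ℝ) < Q a * W a b := mul_pos h hb
          _ ≤ _ := le_marg hQ hW a b
      · exact (hW a).2
      · exact le_of_eq (marg_sum_one hQ hW)
    calc (0:ℝ) ≤ Q a * ∑ b, W a b * Real.logb 2 (W a b / (∑ a', Q a' * W a' b)) :=
          mul_nonneg h.le key
      _ = ∑ b, Q a * W a b * Real.logb 2 (W a b / (∑ a', Q a' * W a' b)) := by
          rw [Finset.mul_sum]
          exact Finset.sum_congr rfl fun b _ => by ring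

/-- `φ(t) = t log₂ t`. -/
noncomputable def phi2 (t : ℝ) : ℝ := t * Real.logb 2 t

lemma phi2_zero : phi2 0 = 0 := by unfold phi2; ring

lemma continuous_phi2 : Continuous phi2 := by
  have : phi2 = fun t => (t * Real.log t) / Real.log 2 := by
    funext t
    unfold phi2 Real.logb
    ring
  rw [this]
  exact Real.continuous_mul_log.div_const _

lemma phi2_term_eq {qa w M : ℝ} (hqa : 0 ≤ qa) (hw : 0 ≤ w) (hM : qa * w ≤ M) :
    qa * w * Real.logb 2 (w / M)
      = phi2 (qa * w) - qa * w * Real.logb 2 qa - qa * w * Real.logb 2 M := by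
  rcases eq_or_lt_of_le hqa with h | hqa'
  · rw [← h]; simp [phi2_zero]
  rcases eq_or_lt_of_le hw with h | hw'
  · rw [← h]; simp [phi2_zero]
  have hMpos : 0 < M := lt_of_lt_of_le (mul_pos hqa' hw') hM
  unfold phi2
  rw [Real.logb_div (ne_of_gt hw') (ne_of_gt hMpos),
    Real.logb_mul (ne_of_gt hqa') (ne_of_gt hw')]
  ring

lemma mutInf2_eq_phi {Q : X → ℝ} {W : X → Xh → ℝ} (hQ : IsPMF Q) (hW : IsCondPMF W) :
    mutInf2 Q W = (∑ a, ∑ b, phi2 (Q a * W a b)) - (∑ a, phi2 (Q a))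
      - (∑ b, phi2 (∑ a, Q a * W a b)) := by
  have h1 : ∀ a : X, phi2 (Q a) = ∑ b, (Q a * W a b) * Real.logb 2 (Q a) := by
    intro a
    have : ∑ b, (Q a * W a b) * Real.logb 2 (Q a)
        = (Q a * ∑ b, W a b) * Real.logb 2 (Q a) := by
      rw [Finset.mul_sum, Finset.sum_mul]
    rw [this, (hW a).2, mul_one]
    rfl
  have h2 : ∀ b : Xh, phi2 (∑ a, Q a * W a b)
      = ∑ a, (Q a * W a b) * Real.logb 2 (∑ a', Q a' * W a' b) := by
    intro b
    unfold phi2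
    rw [Finset.sum_mul]
  rw [Finset.sum_congr rfl fun a _ => h1 a, Finset.sum_congr rfl fun b _ => h2 b,
    Finset.sum_comm (f := fun b a => (Q a * W a b) * Real.logb 2 (∑ a', Q a' * W a' b))]
  rw [← Finset.sum_sub_distrib, ← Finset.sum_sub_distrib]
  unfold mutInf2
  apply Finset.sum_congr rfl
  intro a _
  rw [← Finset.sum_sub_distrib, ← Finset.sum_sub_distrib]
  apply Finset.sum_congr rfl
  intro b _
  exact phi2_term_eq (hQ.1 a) ((hW a).1 b) (le_marg hQ hW a b)

/-- Uniform continuity of mutual information in the channel. -/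
lemma mutInf2_perturb : ∀ ε : ℝ, 0 < ε → ∃ δ : ℝ, 0 < δ ∧
    ∀ (Q : X → ℝ) (W W' : X → Xh → ℝ), IsPMF Q → IsCondPMF W → IsCondPMF W' →
    (∀ a b, |W a b - W' a b| ≤ δ) → |mutInf2 Q W - mutInf2 Q W'| ≤ ε := by
  intro ε hε
  set F : ((X → ℝ) × (X → Xh → ℝ)) → ℝ := fun p =>
    (∑ a, ∑ b, phi2 (p.1 a * p.2 a b)) - (∑ a, phi2 (p.1 a))
      - (∑ b, phi2 (∑ a, p.1 a * p.2 a b)) with hF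
  have hFc : Continuous F := by
    apply Continuous.sub
    apply Continuous.sub
    · apply continuous_finset_sum
      intro a _
      apply continuous_finset_sum
      intro b _
      apply continuous_phi2.comp
      exact ((continuous_apply a).comp continuous_fst).mul
        (((continuous_apply b).comp ((continuous_apply a).comp continuous_snd)))
    · apply continuous_finset_sum
      intro a _
      exact continuous_phi2.comp ((continuous_apply a).comp continuous_fst)
    · apply continuous_finset_sum
      intro b _
      apply continuous_phi2.comp
      apply continuous_finset_sum
      intro a _
      exact ((continuous_apply a).comp continuous_fst).mul
        (((continuous_apply b).comp ((continuous_apply a).comp continuous_snd)))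
  set K : Set ((X → ℝ) × (X → Xh → ℝ)) :=
    (Set.univ.pi fun _ : X => Set.Icc (0:ℝ) 1) ×ˢ
      (Set.univ.pi fun _ : X => Set.univ.pi fun _ : Xh => Set.Icc (0:ℝ) 1) with hK
  have hKc : IsCompact K :=
    (isCompact_univ_pi fun _ => isCompact_Icc).prod
      (isCompact_univ_pi fun _ => isCompact_univ_pi fun _ => isCompact_Icc)
  have hUC := hKc.uniformContinuousOn_of_continuous hFc.continuousOn
  rw [Metric.uniformContinuousOn_iff] at hUC
  obtain ⟨δ, hδ, hδ'⟩ := hUC ε hε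
  refine ⟨δ/2, by linarith, ?_⟩
  intro Q W W' hQ hW hW' hdist
  have hmemW : (Q, W) ∈ K := by
    constructor
    · intro a _
      exact ⟨hQ.1 a, hQ.le_one' a⟩
    · intro a _
      intro b _
      exact ⟨(hW a).1 b, (hW a).le_one' b⟩
  have hmemW' : (Q, W') ∈ K := by
    constructor
    · intro a _
      exact ⟨hQ.1 a, hQ.le_one' a⟩
    · intro a _
      intro b _
      exact ⟨(hW' a).1 b, (hW' a).le_one' b⟩
  have hd : dist (Q, W) (Q, W') < δ := by
    have h1 : dist (Q, W) (Q, W') = max (dist Q Q) (dist W W') := rfl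
    rw [h1, dist_self]
    have h2 : dist W W' ≤ δ/2 := by
      rw [dist_pi_le_iff (by linarith)]
      intro a
      rw [dist_pi_le_iff (by linarith)]
      intro b
      rw [Real.dist_eq]
      exact hdist a b
    have : max 0 (dist W W') ≤ δ/2 := max_le (by linarith) h2
    linarith
  have := hδ' _ hmemW _ hmemW' hd
  rw [Real.dist_eq] at this
  rw [mutInf2_eq_phi hQ hW, mutInf2_eq_phi hQ hW']
  exact le_of_lt this

end MutInf

section RDFacts

variable {X Xh : Type*} [Fintype X] [Fintype Xh]

/-- The feasible-rate set defining `RD`. -/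
def RDset (d : X → Xh → ℝ) (D : ℝ) (Q : X → ℝ) : Set ℝ :=
  { r | ∃ V : X → Xh → ℝ, IsCondPMF V ∧
    (∑ x, ∑ xh, Q x * V x xh * d x xh) ≤ D ∧ r = mutInf2 Q V }

lemma RD_eq_sInf (d : X → Xh → ℝ) (D : ℝ) (Q : X → ℝ) : RD d D Q = sInf (RDset d D Q) := rfl

lemma RDset_nonempty {d : X → Xh → ℝ} {D : ℝ} (hcover : ∀ a : X, ∃ b : Xh, d a b ≤ D)
    {Q : X → ℝ} (hQ : IsPMF Q) : (RDset d D Q).Nonempty := by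
  classical
  set V : X → Xh → ℝ := fun a b => if b = Classical.choose (hcover a) then 1 else 0 with hV
  have hVpmf : IsCondPMF V := by
    intro a
    constructor
    · intro b
      simp only [hV]
      split <;> norm_num
    · simp [hV]
  refine ⟨mutInf2 Q V, V, hVpmf, ?_, rfl⟩
  have h1 : ∀ a : X, ∑ b, Q a * V a b * d a b = Q a * d a (Classical.choose (hcover a)) := by
    intro a
    rw [Finset.sum_eq_single (Classical.choose (hcover a))]
    · simp [hV]
    · intro b _ hb
      simp [hV, hb]
    · intro h
      exact absurd (Finset.mem_univ _) h
  rw [Finset.sum_congr rfl fun a _ => h1 a]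
  calc ∑ a, Q a * d a (Classical.choose (hcover a)) ≤ ∑ a, Q a * D := by
        apply Finset.sum_le_sum
        intro a _
        exact mul_le_mul_of_nonneg_left (Classical.choose_spec (hcover a)) (hQ.1 a)
    _ = D := by rw [← Finset.sum_mul, hQ.2, one_mul]

lemma RDset_bddBelow {d : X → Xh → ℝ} {D : ℝ} {Q : X → ℝ} (hQ : IsPMF Q) :
    BddBelow (RDset d D Q) := by
  refine ⟨0, ?_⟩
  rintro r ⟨V, hV, _, rfl⟩
  exact mutInf2_nonneg hQ hV

lemma RD_le_of_feasible {d : X → Xh → ℝ} {D : ℝ} {Q : X → ℝ} (hQ : IsPMF Q)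
    {V : X → Xh → ℝ} (hV : IsCondPMF V) (hdist : (∑ x, ∑ xh, Q x * V x xh * d x xh) ≤ D) :
    RD d D Q ≤ mutInf2 Q V :=
  csInf_le (RDset_bddBelow hQ) ⟨V, hV, hdist, rfl⟩

lemma RD_nonneg {d : X → Xh → ℝ} {D : ℝ} (hcover : ∀ a : X, ∃ b : Xh, d a b ≤ D)
    {Q : X → ℝ} (hQ : IsPMF Q) : 0 ≤ RD d D Q := by
  rw [RD_eq_sInf]
  apply le_csInf (RDset_nonempty hcover hQ)
  rintro r ⟨V, hV, _, rfl⟩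
  exact mutInf2_nonneg hQ hV

lemma RD_exists_near {d : X → Xh → ℝ} {D : ℝ} (hcover : ∀ a : X, ∃ b : Xh, d a b ≤ D)
    {Q : X → ℝ} (hQ : IsPMF Q) {ε : ℝ} (hε : 0 < ε) :
    ∃ V : X → Xh → ℝ, IsCondPMF V ∧ (∑ x, ∑ xh, Q x * V x xh * d x xh) ≤ D ∧
      mutInf2 Q V < RD d D Q + ε := by
  obtain ⟨r, hr, hrlt⟩ := Real.lt_sInf_add_pos (RDset_nonempty (D := D) hcover hQ) hε
  obtain ⟨V, hV, hdist, rfl⟩ := hr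
  exact ⟨V, hV, hdist, hrlt⟩

/-- Expected log-likelihood ratio bound against a smoothed output distribution. -/
lemma exp_log_ratio_le {Q : X → ℝ} {W : X → Xh → ℝ} (hQ : IsPMF Q) (hW : IsCondPMF W)
    (q' : Xh → ℝ) (c : ℝ) (hq' : ∀ b, 0 < q' b)
    (hlb : ∀ b, (∑ a, Q a * W a b) ≤ q' b * (2:ℝ) ^ c) :
    ∑ a, Q a * (∑ b, W a b * Real.logb 2 (W a b / q' b)) ≤ mutInf2 Q W + c := by
  have key : ∀ a b, Q a * W a b * Real.logb 2 (W a b / q' b)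
      ≤ Q a * W a b * Real.logb 2 (W a b / (∑ a', Q a' * W a' b)) + Q a * W a b * c := by
    intro a b
    rcases eq_or_lt_of_le (hQ.1 a) with h | hqa
    · rw [← h]; simp
    rcases eq_or_lt_of_le ((hW a).1 b) with h | hw
    · rw [← h]; simp
    have hM : 0 < ∑ a', Q a' * W a' b := lt_of_lt_of_le (mul_pos hqa hw) (le_marg hQ hW a b)
    have hlog : Real.logb 2 (∑ a', Q a' * W a' b) ≤ Real.logb 2 (q' b) + c := by
      calc Real.logb 2 (∑ a', Q a' * W a' b) ≤ Real.logb 2 (q' b * (2:ℝ) ^ c) :=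
            Real.logb_le_logb_of_le one_lt_two hM (hlb b)
        _ = Real.logb 2 (q' b) + c := by
            rw [Real.logb_mul (ne_of_gt (hq' b)) (by positivity),
              Real.logb_rpow two_pos (by norm_num)]
    have e1 : Real.logb 2 (W a b / q' b) = Real.logb 2 (W a b) - Real.logb 2 (q' b) :=
      Real.logb_div (ne_of_gt hw) (ne_of_gt (hq' b))
    have e2 : Real.logb 2 (W a b / (∑ a', Q a' * W a' b))
        = Real.logb 2 (W a b) - Real.logb 2 (∑ a', Q a' * W a' b) :=
      Real.logb_div (ne_of_gt hw) (ne_of_gt hM)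
    rw [e1, e2]
    nlinarith [mul_pos hqa hw]
  calc ∑ a, Q a * (∑ b, W a b * Real.logb 2 (W a b / q' b))
      = ∑ a, ∑ b, Q a * W a b * Real.logb 2 (W a b / q' b) := by
        apply Finset.sum_congr rfl
        intro a _
        rw [Finset.mul_sum]
        exact Finset.sum_congr rfl fun b _ => by ring
    _ ≤ ∑ a, ∑ b, (Q a * W a b * Real.logb 2 (W a b / (∑ a', Q a' * W a' b))
          + Q a * W a b * c) := by
        apply Finset.sum_le_sum
        intro a _
        exact Finset.sum_le_sum fun b _ => key a b
    _ = (∑ a, ∑ b, Q a * W a b * Real.logb 2 (W a b / (∑ a', Q a' * W a' b)))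
          + ∑ a, ∑ b, Q a * W a b * c := by
        rw [Finset.sum_congr rfl fun (a : X) (_ : a ∈ Finset.univ) => Finset.sum_add_distrib,
          Finset.sum_add_distrib]
    _ = mutInf2 Q W + c := by
        unfold mutInf2
        congr 1
        rw [Finset.sum_comm]
        calc ∑ b, ∑ a, Q a * W a b * c = ∑ b, (∑ a, Q a * W a b) * c :=
              Finset.sum_congr rfl fun b _ => (Finset.sum_mul _ _ _).symm
          _ = c := by rw [← Finset.sum_mul, marg_sum_one hQ hW, one_mul]

/-- Centered second moment is at most the raw second moment. -/
lemma centered_second_moment_le {α : Type*} [Fintype α] {p : α → ℝ} (hp : IsPMF p)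
    (f : α → ℝ) :
    ∑ b, p b * (f b - ∑ b', p b' * f b') ^ 2 ≤ ∑ b, p b * (f b) ^ 2 := by
  set m := ∑ b', p b' * f b' with hm
  have expand : ∀ b, p b * (f b - m) ^ 2
      = p b * (f b) ^ 2 - 2 * m * (p b * f b) + m ^ 2 * p b := fun b => by ring
  rw [Finset.sum_congr rfl fun b (_ : b ∈ Finset.univ) => expand b, Finset.sum_add_distrib,
    Finset.sum_sub_distrib, ← Finset.mul_sum, ← Finset.mul_sum, ← hm, hp.2]
  nlinarith [sq_nonneg m]

/-- Per-row second moment bound for the log-likelihood ratio. -/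
lemma row_second_moment_le {p : Xh → ℝ} (hp : IsPMF p) {q' : Xh → ℝ} {r : ℝ}
    (hq1 : ∀ b, 0 < q' b) (hq2 : ∀ b, q' b ≤ 1) (hr : 0 < r) (hql : ∀ b, r ≤ q' b) :
    ∑ b, p b * (Real.logb 2 (p b / q' b)) ^ 2
      ≤ 8 * (Fintype.card Xh : ℝ) / (Real.log 2) ^ 2 + 2 * (Real.logb 2 r) ^ 2 := by
  have key : ∀ b, p b * (Real.logb 2 (p b / q' b)) ^ 2
      ≤ 2 * (p b * (Real.logb 2 (p b)) ^ 2) + 2 * p b * (Real.logb 2 r) ^ 2 := by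
    intro b
    rcases eq_or_lt_of_le (hp.1 b) with h | hpb
    · rw [← h]
      simp
    · have hsq : (Real.logb 2 (q' b)) ^ 2 ≤ (Real.logb 2 r) ^ 2 := by
        have h1 : Real.logb 2 r ≤ Real.logb 2 (q' b) :=
          Real.logb_le_logb_of_le one_lt_two hr (hql b)
        have h2 : Real.logb 2 (q' b) ≤ 0 := Real.logb_nonpos one_lt_two (hq1 b).le (hq2 b)
        nlinarith
      rw [Real.logb_div (ne_of_gt hpb) (ne_of_gt (hq1 b))]
      nlinarith [sq_nonneg (Real.logb 2 (p b) + Real.logb 2 (q' b)),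
        mul_le_mul_of_nonneg_left hsq hpb.le]
  calc ∑ b, p b * (Real.logb 2 (p b / q' b)) ^ 2
      ≤ ∑ b, (2 * (p b * (Real.logb 2 (p b)) ^ 2) + 2 * p b * (Real.logb 2 r) ^ 2) :=
        Finset.sum_le_sum fun b _ => key b
    _ = 2 * (∑ b, p b * (Real.logb 2 (p b)) ^ 2) + 2 * (Real.logb 2 r) ^ 2 * (∑ b, p b) := by
        rw [Finset.sum_add_distrib]
        congr 1
        · rw [Finset.mul_sum]
        · rw [Finset.mul_sum]
          exact Finset.sum_congr rfl fun b _ => by ring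
    _ ≤ 8 * (Fintype.card Xh : ℝ) / (Real.log 2) ^ 2 + 2 * (Real.logb 2 r) ^ 2 := by
        rw [hp.2, mul_one]
        have hsum : (∑ b, p b * (Real.logb 2 (p b)) ^ 2)
            ≤ (Fintype.card Xh : ℝ) * (4 / (Real.log 2) ^ 2) := by
          rw [← Finset.card_univ, ← nsmul_eq_mul, ← Finset.sum_const]
          exact Finset.sum_le_sum fun b _ => mul_logb_sq_le (hp.1 b) (hp.le_one' b)
        have : 2 * ((Fintype.card Xh : ℝ) * (4 / (Real.log 2) ^ 2))
            = 8 * (Fintype.card Xh : ℝ) / (Real.log 2) ^ 2 := by ring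
        nlinarith
end RDFacts

section Emp

variable {Xh : Type*} [Fintype Xh] {n : ℕ}

/-- Number of occurrences of `a` in `x`. -/
noncomputable def cnt (x : Fin n → Xh) (a : Xh) : ℕ := (univ.filter fun i => x i = a).card

lemma empDist_eq_cnt (x : Fin n → Xh) (a : Xh) : empDist x a = (cnt x a : ℝ) / n := rfl

lemma sum_cnt (x : Fin n → Xh) : ∑ a, cnt x a = n := by
  unfold cnt
  rw [← Finset.card_eq_sum_card_fiberwise (fun i (_ : i ∈ univ) => Finset.mem_univ (x i))]
  simp

lemma cnt_le (x : Fin n → Xh) (a : Xh) : cnt x a ≤ n := by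
  calc cnt x a ≤ (univ : Finset (Fin n)).card := Finset.card_filter_le _ _
    _ = n := by simp

lemma empDist_nonneg (x : Fin n → Xh) (a : Xh) : 0 ≤ empDist x a := by
  rw [empDist_eq_cnt]
  positivity

lemma empDist_isPMF (hn : n ≠ 0) (x : Fin n → Xh) : IsPMF (empDist x) := by
  refine ⟨empDist_nonneg x, ?_⟩
  have : ∑ a, empDist x a = (∑ a, (cnt x a : ℝ)) / n := by
    rw [Finset.sum_div]
    rfl
  rw [this, ← Nat.cast_sum, sum_cnt]
  field_simp

lemma cnt_pos_apply (x : Fin n → Xh) (i : Fin n) : 0 < cnt x (x i) := by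
  apply Finset.card_pos.mpr
  exact ⟨i, Finset.mem_filter.mpr ⟨Finset.mem_univ i, rfl⟩⟩

lemma empDist_pos_of_cnt {x : Fin n → Xh} {a : Xh} (h : 0 < cnt x a) : 0 < empDist x a := by
  rw [empDist_eq_cnt]
  have hn : 0 < n := lt_of_lt_of_le h (cnt_le x a)
  positivity

lemma n_mul_empDist (hn : n ≠ 0) (x : Fin n → Xh) (a : Xh) :
    (n : ℝ) * empDist x a = (cnt x a : ℝ) := by
  rw [empDist_eq_cnt]
  field_simp

lemma log_prod_pow (q : Xh → ℝ) (c : Xh → ℕ) (h : ∀ b, 0 < c b → 0 < q b) :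
    Real.log (∏ b, q b ^ c b) = ∑ b, (c b : ℝ) * Real.log (q b) := by
  rw [Real.log_prod]
  · exact Finset.sum_congr rfl fun b _ => by rw [Real.log_pow]
  · intro b _
    rcases Nat.eq_zero_or_pos (c b) with h0 | h0
    · rw [h0, pow_zero]; norm_num
    · exact ne_of_gt (pow_pos (h b h0) _)

lemma prod_pow_pos (q : Xh → ℝ) (c : Xh → ℕ) (h : ∀ b, 0 < c b → 0 < q b) :
    0 < ∏ b, q b ^ c b := by
  apply Finset.prod_pos
  intro b _
  rcases Nat.eq_zero_or_pos (c b) with h0 | h0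
  · rw [h0, pow_zero]; norm_num
  · exact pow_pos (h b h0) _

lemma rpow_eq_prod_pow {t : ℝ} (q : Xh → ℝ) (c : Xh → ℕ) (h : ∀ b, 0 < c b → 0 < q b)
    (ht : t * Real.log 2 = ∑ b, (c b : ℝ) * Real.log (q b)) :
    (2:ℝ) ^ t = ∏ b, q b ^ c b := by
  rw [Real.rpow_def_of_pos two_pos, ← Real.exp_log (prod_pow_pos q c h), log_prod_pow q c h,
    ← ht, mul_comm]

lemma negEnt_mul_log (hn : n ≠ 0) (z : Fin n → Xh) :
    (-(n:ℝ) * empEnt z) * Real.log 2 = ∑ b, (cnt z b : ℝ) * Real.log (empDist z b) := by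
  unfold empEnt
  rw [neg_mul_neg, Finset.mul_sum, Finset.sum_mul]
  apply Finset.sum_congr rfl
  intro b _
  rw [← n_mul_empDist hn z b]
  unfold Real.logb
  have h2 : Real.log 2 ≠ 0 := ne_of_gt (Real.log_pos one_lt_two)
  field_simp

lemma rpow_negEnt_eq_prod (hn : n ≠ 0) (z : Fin n → Xh) :
    (2:ℝ) ^ (-(n:ℝ) * empEnt z) = ∏ b, empDist z b ^ cnt z b :=
  rpow_eq_prod_pow _ _ (fun b hb => empDist_pos_of_cnt hb) (negEnt_mul_log hn z)

lemma rpow_negEnt_eq_prod' (hn : n ≠ 0) (z : Fin n → Xh) :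
    (2:ℝ) ^ (-(n:ℝ) * empEnt z) = ∏ i, empDist z (z i) := by
  rw [rpow_negEnt_eq_prod hn z, prod_comp_eq_prod_pow z (empDist z)]
  rfl

lemma rpow_negEnt_pos (hn : n ≠ 0) (z : Fin n → Xh) :
    0 < (2:ℝ) ^ (-(n:ℝ) * empEnt z) := Real.rpow_pos_of_pos two_pos _

/-- Gibbs inequality, product form: the empirical distribution maximizes the
product probability of a sequence. -/
lemma prod_le_prod_emp (hn : n ≠ 0) (z : Fin n → Xh) (q : Xh → ℝ)
    (hq : ∀ b, 0 < q b) (hqs : ∑ b, q b ≤ 1) :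
    ∏ i, q (z i) ≤ ∏ i, empDist z (z i) := by
  have hpmf := empDist_isPMF hn z
  have hg := gibbs2 (empDist z) q hpmf.1 hq hpmf.2 hqs
  have hlog : ∑ b, (cnt z b : ℝ) * Real.log (q b)
      ≤ ∑ b, (cnt z b : ℝ) * Real.log (empDist z b) := by
    have h2 : (0:ℝ) < Real.log 2 := Real.log_pos one_lt_two
    have e : ∀ (u : Xh → ℝ), ∑ b, ((n:ℝ) * empDist z b) * (Real.logb 2 (u b) * Real.log 2)
        = ((n:ℝ) * Real.log 2) * ∑ b, empDist z b * Real.logb 2 (u b) := by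
      intro u
      rw [Finset.mul_sum]
      exact Finset.sum_congr rfl fun b _ => by ring
    have e1 : ∀ (u : Xh → ℝ) (b : Xh), (cnt z b : ℝ) * Real.log (u b)
        = ((n:ℝ) * empDist z b) * (Real.logb 2 (u b) * Real.log 2) := by
      intro u b
      rw [n_mul_empDist hn]
      unfold Real.logb
      field_simp
    rw [Finset.sum_congr rfl fun b (_ : b ∈ univ) => e1 q b,
      Finset.sum_congr rfl fun b (_ : b ∈ univ) => e1 (empDist z) b, e q, e (empDist z)]
    have hn' : (0:ℝ) < (n:ℝ) := by
      have := Nat.pos_of_ne_zero hn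
      exact_mod_cast this
    apply mul_le_mul_of_nonneg_left hg (by positivity)
  rw [prod_comp_eq_prod_pow z q, prod_comp_eq_prod_pow z (empDist z)]
  have hql : 0 < ∏ b, q b ^ (univ.filter fun i => z i = b).card :=
    prod_pow_pos q _ fun b _ => hq b
  have hpl : 0 < ∏ b, empDist z b ^ (univ.filter fun i => z i = b).card :=
    prod_pow_pos _ _ fun b hb => empDist_pos_of_cnt hb
  rw [← Real.exp_log hql, ← Real.exp_log hpl]
  apply Real.exp_le_exp.mpr
  rw [log_prod_pow q (fun b => (univ.filter fun i => z i = b).card) (fun b _ => hq b),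
    log_prod_pow (empDist z) (fun b => (univ.filter fun i => z i = b).card)
      (fun b hb => empDist_pos_of_cnt hb)]
  exact hlog

/-- Group a sum according to the fibers of a map `c`, bounding each fiber sum by 1. -/
lemma sum_le_card_image {α γ : Type*} [Fintype α] [DecidableEq γ] (c : α → γ) (f : α → ℝ)
    (h : ∀ v ∈ univ.image c, ∑ z ∈ univ.filter (fun z => c z = v), f z ≤ 1) :
    ∑ z, f z ≤ ((univ.image c).card : ℝ) := by
  rw [← Finset.sum_fiberwise_of_maps_to (fun z (_ : z ∈ univ) =>
    Finset.mem_image_of_mem c (Finset.mem_univ z)) f]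
  calc ∑ v ∈ univ.image c, ∑ z ∈ univ.filter (fun z => c z = v), f z
      ≤ ∑ _v ∈ univ.image c, (1:ℝ) := Finset.sum_le_sum h
    _ = ((univ.image c).card : ℝ) := by rw [Finset.sum_const, nsmul_eq_mul, mul_one]

lemma card_image_le_pow {α γ : Type*} [Fintype α] [Fintype γ] [DecidableEq (γ → ℕ)] (c : α → γ → ℕ)
    (hb : ∀ z g, c z g ≤ n) :
    ((univ.image c).card : ℝ) ≤ ((n:ℝ) + 1) ^ (Fintype.card γ) := by
  have h1 : (univ.image c).card ≤ Fintype.card (γ → Fin (n+1)) := by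
    apply Finset.card_le_card_of_injOn
      (fun v g => (⟨min (v g) n, by omega⟩ : Fin (n + 1)))
      (fun _ _ => Finset.mem_univ _)
    intro v₁ h₁ v₂ h₂ heq
    obtain ⟨z₁, _, rfl⟩ := Finset.mem_image.mp (by exact_mod_cast h₁)
    obtain ⟨z₂, _, rfl⟩ := Finset.mem_image.mp (by exact_mod_cast h₂)
    funext g
    have := congrFun heq g
    have h3 : min (c z₁ g) n = min (c z₂ g) n := by
      exact_mod_cast congrArg Fin.val this
    rw [min_eq_left (hb z₁ g), min_eq_left (hb z₂ g)] at h3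
    exact h3
  have h2 : Fintype.card (γ → Fin (n+1)) = (n+1) ^ (Fintype.card γ) := by
    rw [Fintype.card_fun, Fintype.card_fin]
  calc ((univ.image c).card : ℝ) ≤ ((n+1) ^ (Fintype.card γ) : ℕ) := by
        exact_mod_cast h1.trans (le_of_eq h2)
    _ = ((n:ℝ) + 1) ^ (Fintype.card γ) := by push_cast; ring

lemma Z_ge_one [Nonempty Xh] (hn : n ≠ 0) :
    1 ≤ ∑ z : Fin n → Xh, (2:ℝ) ^ (-(n:ℝ) * empEnt z) := by
  set z0 : Fin n → Xh := fun _ => Classical.arbitrary Xh with hz0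
  have hent : empEnt z0 = 0 := by
    unfold empEnt
    rw [Finset.sum_eq_zero, neg_zero]
    intro b _
    rcases eq_or_ne b (Classical.arbitrary Xh) with h | h
    · have : cnt z0 b = n := by
        unfold cnt
        rw [h]
        simp [hz0]
      rw [empDist_eq_cnt, this]
      have : ((n:ℝ))/n = 1 := by field_simp
      rw [this, Real.logb_one, mul_zero]
    · have : cnt z0 b = 0 := by
        unfold cnt
        rw [Finset.card_eq_zero, Finset.filter_eq_empty_iff]
        intro i _
        simp only [hz0]
        exact fun hc => h hc.symm
      rw [empDist_eq_cnt, this]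
      norm_num
  calc (1:ℝ) = (2:ℝ) ^ (-(n:ℝ) * empEnt z0) := by rw [hent, mul_zero, Real.rpow_zero]
    _ ≤ ∑ z : Fin n → Xh, (2:ℝ) ^ (-(n:ℝ) * empEnt z) :=
        Finset.single_le_sum (fun z _ => (rpow_negEnt_pos hn z).le) (Finset.mem_univ z0)

lemma Z_le_pow (hn : n ≠ 0) :
    ∑ z : Fin n → Xh, (2:ℝ) ^ (-(n:ℝ) * empEnt z)
      ≤ ((n:ℝ) + 1) ^ (Fintype.card Xh) := by
  calc ∑ z : Fin n → Xh, (2:ℝ) ^ (-(n:ℝ) * empEnt z)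
      = ∑ z : Fin n → Xh, ∏ i, empDist z (z i) :=
        Finset.sum_congr rfl fun z _ => rpow_negEnt_eq_prod' hn z
    _ ≤ ((univ.image (fun z : Fin n → Xh => cnt z)).card : ℝ) := by
        refine sum_le_card_image (fun z : Fin n → Xh => cnt z) _ ?_
        intro v hv
        obtain ⟨z', _, hz'⟩ := Finset.mem_image.mp hv
        have h1 : ∀ z ∈ univ.filter (fun z : Fin n → Xh => cnt z = v),
            (∏ i, empDist z (z i)) = ∏ i, ((v (z i) : ℝ) / n) := by
          intro z hz
          have hc : cnt z = v := (Finset.mem_filter.mp hz).2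
          exact Finset.prod_congr rfl fun i _ => by rw [empDist_eq_cnt, hc]
        rw [Finset.sum_congr rfl h1]
        have h2 : ∑ z ∈ univ.filter (fun z : Fin n → Xh => cnt z = v),
              ∏ i, ((v (z i) : ℝ) / n)
            ≤ ∑ z : Fin n → Xh, ∏ i, ((v (z i) : ℝ) / n) := by
          apply Finset.sum_le_sum_of_subset_of_nonneg (Finset.filter_subset _ _)
          intro z _ _
          exact Finset.prod_nonneg fun i _ => by positivity
        have h3 : ∑ z : Fin n → Xh, ∏ i, ((v (z i) : ℝ) / n) = 1 := by
          rw [sum_pi_prod (fun _ b => ((v b : ℝ) / n))]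
          have hsv : ∑ b, v b = n := by rw [← hz', sum_cnt]
          have : ∑ b, ((v b : ℝ) / n) = 1 := by
            rw [← Finset.sum_div, ← Nat.cast_sum, hsv]
            field_simp
          rw [Finset.prod_congr rfl fun i _ => this, Finset.prod_const_one]
        linarith
    _ ≤ ((n:ℝ) + 1) ^ (Fintype.card Xh) := card_image_le_pow _ cnt_le

end Emp

section Upper

variable {X Xh : Type*} [Fintype X] [Fintype Xh] [Nonempty Xh]

/-- The paired sequence `i ↦ (x i, z i)`. -/
def pairSeq {n : ℕ} (x : Fin n → X) (z : Fin n → Xh) : Fin n → X × Xh := fun i => (x i, z i)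

lemma jcnt_row {n : ℕ} (x : Fin n → X) (z : Fin n → Xh) (a : X) :
    ∑ b, cnt (pairSeq x z) (a, b) = cnt x a := by
  unfold cnt
  rw [Finset.card_eq_sum_card_fiberwise
    (f := fun i => z i) (t := univ) (fun i _ => Finset.mem_univ (z i))]
  apply Finset.sum_congr rfl
  intro b _
  congr 1
  rw [Finset.filter_filter]
  ext i
  simp [pairSeq, Prod.ext_iff]

lemma jcnt_col {n : ℕ} (x : Fin n → X) (z : Fin n → Xh) (b : Xh) :
    ∑ a, cnt (pairSeq x z) (a, b) = cnt z b := by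
  unfold cnt
  rw [Finset.card_eq_sum_card_fiberwise
    (f := fun i => x i) (t := univ) (fun i _ => Finset.mem_univ (x i))]
  apply Finset.sum_congr rfl
  intro a _
  congr 1
  rw [Finset.filter_filter]
  ext i
  simp [pairSeq, Prod.ext_iff, and_comm]

lemma jcnt_le_row {n : ℕ} (x : Fin n → X) (z : Fin n → Xh) (a : X) (b : Xh) :
    cnt (pairSeq x z) (a, b) ≤ cnt x a := by
  apply Finset.card_le_card
  intro i hi
  simp only [Finset.mem_filter] at hi ⊢
  refine ⟨hi.1, ?_⟩
  have h2 := hi.2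
  simp only [pairSeq, Prod.mk.injEq] at h2
  exact h2.1

lemma dSeq_eq_sum_jcnt {n : ℕ} (d : X → Xh → ℝ) (x : Fin n → X) (z : Fin n → Xh) :
    dSeq d x z = ∑ p : X × Xh, (cnt (pairSeq x z) p : ℝ) * d p.1 p.2 := by
  unfold dSeq
  have h := sum_comp_eq_sum_card (pairSeq x z) (fun p : X × Xh => d p.1 p.2)
  simpa [pairSeq, cnt] using h

/-- The empirical channel associated with a joint-count matrix `v`. -/
noncomputable def Vof {n : ℕ} (x : Fin n → X) (v : X × Xh → ℕ) : X → Xh → ℝ :=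
  fun a b => if cnt x a = 0 then (if b = Classical.arbitrary Xh then 1 else 0)
    else (v (a, b) : ℝ) / cnt x a

lemma Vof_nonneg {n : ℕ} (x : Fin n → X) (v : X × Xh → ℕ) (a : X) (b : Xh) :
    0 ≤ Vof x v a b := by
  unfold Vof
  split
  · split <;> norm_num
  · positivity

lemma Vof_condPMF {n : ℕ} (x : Fin n → X) (v : X × Xh → ℕ)
    (hrow : ∀ a, ∑ b, v (a, b) = cnt x a) : IsCondPMF (Vof x v) := by
  intro a
  refine ⟨Vof_nonneg x v a, ?_⟩
  unfold Vof
  by_cases h : cnt x a = 0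
  · simp only [h, if_true]
    rw [Finset.sum_ite_eq' univ (Classical.arbitrary Xh) (fun _ => (1:ℝ))]
    simp
  · simp only [h, if_false]
    rw [← Finset.sum_div, ← Nat.cast_sum, hrow a]
    field_simp

lemma Vof_row_zero {n : ℕ} (x : Fin n → X) (v : X × Xh → ℕ)
    (hrow : ∀ a, ∑ b, v (a, b) = cnt x a) {a : X} (h : cnt x a = 0) (b : Xh) :
    v (a, b) = 0 := by
  have h1 : ∑ b, v (a, b) = 0 := by rw [hrow a, h]
  have := Finset.sum_eq_zero_iff.mp h1
  exact this b (Finset.mem_univ b)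

lemma Vof_distortion {n : ℕ} (hn : n ≠ 0) (d : X → Xh → ℝ) (x : Fin n → X) (v : X × Xh → ℕ)
    (hrow : ∀ a, ∑ b, v (a, b) = cnt x a) :
    ∑ a, ∑ b, empDist x a * Vof x v a b * d a b
      = (∑ p : X × Xh, (v p : ℝ) * d p.1 p.2) / n := by
  rw [Fintype.sum_prod_type, Finset.sum_div]
  apply Finset.sum_congr rfl
  intro a _
  rw [Finset.sum_div]
  apply Finset.sum_congr rfl
  intro b _
  by_cases h : cnt x a = 0
  · rw [Vof_row_zero x v hrow h b, empDist_eq_cnt, h]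
    norm_num
  · unfold Vof
    rw [if_neg h, empDist_eq_cnt]
    have hc : (cnt x a : ℝ) ≠ 0 := Nat.cast_ne_zero.mpr h
    have hn' : (n : ℝ) ≠ 0 := Nat.cast_ne_zero.mpr hn
    field_simp

lemma Vof_marg {n : ℕ} (hn : n ≠ 0) (x : Fin n → X) (z : Fin n → Xh) (b : Xh) :
    ∑ a, empDist x a * Vof x (cnt (pairSeq x z)) a b = empDist z b := by
  have key : ∀ a, empDist x a * Vof x (cnt (pairSeq x z)) a b
      = (cnt (pairSeq x z) (a, b) : ℝ) / n := by
    intro a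
    by_cases h : cnt x a = 0
    · have hz : cnt (pairSeq x z) (a, b) = 0 :=
        Nat.le_zero.mp (h ▸ jcnt_le_row x z a b)
      rw [empDist_eq_cnt, h, hz]
      norm_num
    · unfold Vof
      rw [if_neg h, empDist_eq_cnt]
      have hc : (cnt x a : ℝ) ≠ 0 := Nat.cast_ne_zero.mpr h
      field_simp
  rw [Finset.sum_congr rfl fun a _ => key a, ← Finset.sum_div, ← Nat.cast_sum, jcnt_col,
    empDist_eq_cnt]

/-- Mutual information of the joint empirical type, with the output marginal rewritten. -/
lemma mutInf2_emp_eq {n : ℕ} (hn : n ≠ 0) (x : Fin n → X) (z : Fin n → Xh) :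
    mutInf2 (empDist x) (Vof x (cnt (pairSeq x z)))
      = ∑ a, ∑ b, empDist x a * Vof x (cnt (pairSeq x z)) a b *
          Real.logb 2 (Vof x (cnt (pairSeq x z)) a b / empDist z b) := by
  unfold mutInf2
  apply Finset.sum_congr rfl
  intro a _
  apply Finset.sum_congr rfl
  intro b _
  rw [Vof_marg hn x z b]

/-- Key exponent identity for the upper bound. -/
lemma rpow_negEnt_eq_mutInf_prod {n : ℕ} (hn : n ≠ 0) (x : Fin n → X) (z : Fin n → Xh) :
    (2:ℝ) ^ (-(n:ℝ) * empEnt z)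
      = (2:ℝ) ^ (-(n:ℝ) * mutInf2 (empDist x) (Vof x (cnt (pairSeq x z))))
          * ∏ i, Vof x (cnt (pairSeq x z)) (x i) (z i) := by
  set v := cnt (pairSeq x z) with hv
  set V := Vof x v with hV
  have hVpos : ∀ p : X × Xh, 0 < v p → 0 < V p.1 p.2 := by
    intro p hp
    have hcx : 0 < cnt x p.1 := lt_of_lt_of_le hp (jcnt_le_row x z p.1 p.2)
    rw [hV]
    unfold Vof
    rw [if_neg (Nat.pos_iff_ne_zero.mp hcx)]
    have : (0:ℝ) < v (p.1, p.2) := by exact_mod_cast hp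
    positivity
  have hprod : ∏ i, V (x i) (z i) = ∏ p : X × Xh, (V p.1 p.2) ^ (v p) := by
    have h := prod_comp_eq_prod_pow (pairSeq x z) (fun p : X × Xh => V p.1 p.2)
    simpa [pairSeq, cnt, hv] using h
  have hppos : 0 < ∏ p : X × Xh, (V p.1 p.2) ^ (v p) := by
    apply Finset.prod_pos
    intro p _
    rcases Nat.eq_zero_or_pos (v p) with h0 | h0
    · rw [h0, pow_zero]; norm_num
    · exact pow_pos (hVpos p h0) _
  -- log computation
  have hlogprod : Real.log (∏ p : X × Xh, (V p.1 p.2) ^ (v p))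
      = ∑ p : X × Xh, (v p : ℝ) * Real.log (V p.1 p.2) := by
    rw [Real.log_prod]
    · exact Finset.sum_congr rfl fun p _ => by rw [Real.log_pow]
    · intro p _
      rcases Nat.eq_zero_or_pos (v p) with h0 | h0
      · rw [h0, pow_zero]; norm_num
      · exact ne_of_gt (pow_pos (hVpos p h0) _)
  have key : (-(n:ℝ) * empEnt z) * Real.log 2
      = (-(n:ℝ) * mutInf2 (empDist x) V) * Real.log 2
          + ∑ p : X × Xh, (v p : ℝ) * Real.log (V p.1 p.2) := by
    rw [negEnt_mul_log hn z]
    have hstar : ((n:ℝ) * mutInf2 (empDist x) V) * Real.log 2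
        = (∑ p : X × Xh, (v p : ℝ) * Real.log (V p.1 p.2))
          - ∑ b, (cnt z b : ℝ) * Real.log (empDist z b) := by
      rw [hV, mutInf2_emp_eq hn x z, ← hV]
      have hterm : ∀ a b, (n:ℝ) * (empDist x a * V a b * Real.logb 2 (V a b / empDist z b))
            * Real.log 2
          = (v (a, b) : ℝ) * Real.log (V a b) - (v (a, b) : ℝ) * Real.log (empDist z b) := by
        intro a b
        rcases Nat.eq_zero_or_pos (v (a, b)) with h0 | h0
        · by_cases h : cnt x a = 0
          · rw [h0, empDist_eq_cnt, h]
            norm_num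
          · have hV0 : V a b = 0 := by
              rw [hV]
              unfold Vof
              rw [if_neg h, hv]
              rw [show cnt (pairSeq x z) (a, b) = v (a, b) from rfl, h0]
              norm_num
            rw [h0, hV0]
            norm_num
        · have hcx : 0 < cnt x a := lt_of_lt_of_le h0 (jcnt_le_row x z a b)
          have hVab : 0 < V a b := hVpos (a, b) h0
          have hzb : 0 < cnt z b := by
            apply lt_of_lt_of_le h0
            rw [← jcnt_col x z b]
            exact Finset.single_le_sum (f := fun a => cnt (pairSeq x z) (a, b))
              (fun a _ => Nat.zero_le _) (Finset.mem_univ a)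
          have hez : 0 < empDist z b := empDist_pos_of_cnt hzb
          have hnQV : (n:ℝ) * (empDist x a * V a b) = (v (a, b) : ℝ) := by
            rw [empDist_eq_cnt, hV]
            unfold Vof
            rw [if_neg (Nat.pos_iff_ne_zero.mp hcx)]
            have hc : (cnt x a : ℝ) ≠ 0 := by positivity
            have hn' : (n : ℝ) ≠ 0 := Nat.cast_ne_zero.mpr hn
            field_simp
          have hlogb : Real.logb 2 (V a b / empDist z b) * Real.log 2
              = Real.log (V a b) - Real.log (empDist z b) := by
            unfold Real.logb
            rw [div_mul_cancel₀ _ (ne_of_gt (Real.log_pos one_lt_two))]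
            exact Real.log_div (ne_of_gt hVab) (ne_of_gt hez)
          calc (n:ℝ) * (empDist x a * V a b * Real.logb 2 (V a b / empDist z b)) * Real.log 2
              = ((n:ℝ) * (empDist x a * V a b))
                  * (Real.logb 2 (V a b / empDist z b) * Real.log 2) := by ring
            _ = (v (a, b) : ℝ) * (Real.log (V a b) - Real.log (empDist z b)) := by
                rw [hnQV, hlogb]
            _ = (v (a, b) : ℝ) * Real.log (V a b)
                  - (v (a, b) : ℝ) * Real.log (empDist z b) := by ring
      calc ((n:ℝ) * (∑ a, ∑ b, empDist x a * V a b * Real.logb 2 (V a b / empDist z b)))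
            * Real.log 2
          = ∑ a, ∑ b, (n:ℝ) * (empDist x a * V a b * Real.logb 2 (V a b / empDist z b))
              * Real.log 2 := by
            rw [Finset.mul_sum, Finset.sum_mul]
            apply Finset.sum_congr rfl
            intro a _
            rw [Finset.mul_sum, Finset.sum_mul]
        _ = ∑ a, ∑ b, ((v (a, b) : ℝ) * Real.log (V a b)
              - (v (a, b) : ℝ) * Real.log (empDist z b)) := by
            exact Finset.sum_congr rfl fun a _ => Finset.sum_congr rfl fun b _ => hterm a b
        _ = (∑ p : X × Xh, (v p : ℝ) * Real.log (V p.1 p.2))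
              - ∑ b, (cnt z b : ℝ) * Real.log (empDist z b) := by
            rw [Finset.sum_congr rfl fun (a : X) (_ : a ∈ univ) => Finset.sum_sub_distrib _ _,
              Finset.sum_sub_distrib, Fintype.sum_prod_type]
            congr 1
            rw [Finset.sum_comm]
            apply Finset.sum_congr rfl
            intro b _
            rw [← Finset.sum_mul, ← Nat.cast_sum, jcnt_col]
    nlinarith [hstar]
  calc (2:ℝ) ^ (-(n:ℝ) * empEnt z)
      = Real.exp ((-(n:ℝ) * empEnt z) * Real.log 2) := by
        rw [Real.rpow_def_of_pos two_pos, mul_comm]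
    _ = Real.exp ((-(n:ℝ) * mutInf2 (empDist x) V) * Real.log 2)
          * Real.exp (∑ p : X × Xh, (v p : ℝ) * Real.log (V p.1 p.2)) := by
        rw [key, Real.exp_add]
    _ = (2:ℝ) ^ (-(n:ℝ) * mutInf2 (empDist x) V) * ∏ i, V (x i) (z i) := by
        congr 1
        · rw [Real.rpow_def_of_pos two_pos, mul_comm]
        · rw [← hlogprod, Real.exp_log hppos, hprod]

end Upper

section UpperAssemble

variable {X Xh : Type*} [Fintype X] [Fintype Xh] [Nonempty Xh]

lemma upper_bound {n : ℕ} (hn : n ≠ 0) (d : X → Xh → ℝ) (D : ℝ) (x : Fin n → X) :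
    ∑ z ∈ univ.filter (fun z : Fin n → Xh => dSeq d x z ≤ (n:ℝ) * D),
        (2:ℝ) ^ (-(n:ℝ) * empEnt z)
      ≤ ((n:ℝ) + 1) ^ (Fintype.card (X × Xh))
          * (2:ℝ) ^ (-(n:ℝ) * RD d D (empDist x)) := by
  have hQ := empDist_isPMF hn x
  set f : (Fin n → Xh) → ℝ :=
    fun z => ∏ i, Vof x (cnt (pairSeq x z)) (x i) (z i) with hf
  have hfnn : ∀ z, 0 ≤ f z := fun z =>
    Finset.prod_nonneg fun i _ => Vof_nonneg x _ (x i) (z i)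
  have step1 : ∀ z ∈ univ.filter (fun z : Fin n → Xh => dSeq d x z ≤ (n:ℝ) * D),
      (2:ℝ) ^ (-(n:ℝ) * empEnt z)
        ≤ (2:ℝ) ^ (-(n:ℝ) * RD d D (empDist x)) * f z := by
    intro z hz
    have hball : dSeq d x z ≤ (n:ℝ) * D := (Finset.mem_filter.mp hz).2
    have hrow := jcnt_row x z
    have hVpmf := Vof_condPMF x (cnt (pairSeq x z)) hrow
    have hdist : ∑ a, ∑ b, empDist x a * Vof x (cnt (pairSeq x z)) a b * d a b ≤ D := by
      rw [Vof_distortion hn d x _ hrow, ← dSeq_eq_sum_jcnt]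
      have hn' : (0:ℝ) < n := by exact_mod_cast Nat.pos_of_ne_zero hn
      rw [div_le_iff₀ hn']
      linarith [hball]
    have hRD : RD d D (empDist x) ≤ mutInf2 (empDist x) (Vof x (cnt (pairSeq x z))) :=
      RD_le_of_feasible hQ hVpmf hdist
    rw [rpow_negEnt_eq_mutInf_prod hn x z]
    apply mul_le_mul_of_nonneg_right _ (hfnn z)
    apply Real.rpow_le_rpow_of_exponent_le one_le_two
    have hn0 : (0:ℝ) ≤ n := Nat.cast_nonneg n
    nlinarith [hRD]
  have step2 : ∑ z : Fin n → Xh, f z ≤ ((n:ℝ) + 1) ^ (Fintype.card (X × Xh)) := by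
    have h1 : ∑ z : Fin n → Xh, f z
        ≤ ((univ.image (fun z : Fin n → Xh => cnt (pairSeq x z))).card : ℝ) := by
      refine sum_le_card_image (fun z : Fin n → Xh => cnt (pairSeq x z)) f ?_
      intro v hv
      obtain ⟨z', _, hz'⟩ := Finset.mem_image.mp hv
      have hrow : ∀ a, ∑ b, v (a, b) = cnt x a := by
        intro a
        rw [← hz']
        exact jcnt_row x z' a
      have h2 : ∀ z ∈ univ.filter
          (fun z : Fin n → Xh => cnt (pairSeq x z) = v),
          f z = ∏ i, Vof x v (x i) (z i) := by
        intro z hz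
        have hc : cnt (pairSeq x z) = v := (Finset.mem_filter.mp hz).2
        rw [hf]
        simp only [hc]
      rw [Finset.sum_congr rfl h2]
      have h3 : ∑ z ∈ univ.filter (fun z : Fin n → Xh => cnt (pairSeq x z) = v),
            ∏ i, Vof x v (x i) (z i)
          ≤ ∑ z : Fin n → Xh, ∏ i, Vof x v (x i) (z i) := by
        apply Finset.sum_le_sum_of_subset_of_nonneg (Finset.filter_subset _ _)
        intro z _ _
        exact Finset.prod_nonneg fun i _ => Vof_nonneg x v (x i) (z i)
      have h4 : ∑ z : Fin n → Xh, ∏ i, Vof x v (x i) (z i) = 1 := by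
        rw [sum_pi_prod (fun i b => Vof x v (x i) b)]
        have : ∀ i : Fin n, ∑ b, Vof x v (x i) b = 1 := fun i => (Vof_condPMF x v hrow (x i)).2
        rw [Finset.prod_congr rfl fun i _ => this i, Finset.prod_const_one]
      linarith
    exact h1.trans (card_image_le_pow (fun z (p : X × Xh) => cnt (pairSeq x z) p)
      (fun z p => cnt_le _ p))
  calc ∑ z ∈ univ.filter (fun z : Fin n → Xh => dSeq d x z ≤ (n:ℝ) * D),
        (2:ℝ) ^ (-(n:ℝ) * empEnt z)
      ≤ ∑ z ∈ univ.filter (fun z : Fin n → Xh => dSeq d x z ≤ (n:ℝ) * D),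
          (2:ℝ) ^ (-(n:ℝ) * RD d D (empDist x)) * f z := Finset.sum_le_sum step1
    _ = (2:ℝ) ^ (-(n:ℝ) * RD d D (empDist x))
          * ∑ z ∈ univ.filter (fun z : Fin n → Xh => dSeq d x z ≤ (n:ℝ) * D), f z := by
        rw [Finset.mul_sum]
    _ ≤ (2:ℝ) ^ (-(n:ℝ) * RD d D (empDist x)) * ∑ z : Fin n → Xh, f z := by
        apply mul_le_mul_of_nonneg_left _ (Real.rpow_pos_of_pos two_pos _).le
        apply Finset.sum_le_sum_of_subset_of_nonneg (Finset.filter_subset _ _)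
        exact fun z _ _ => hfnn z
    _ ≤ (2:ℝ) ^ (-(n:ℝ) * RD d D (empDist x)) * ((n:ℝ) + 1) ^ (Fintype.card (X × Xh)) :=
        mul_le_mul_of_nonneg_left step2 (Real.rpow_pos_of_pos two_pos _).le
    _ = ((n:ℝ) + 1) ^ (Fintype.card (X × Xh)) * (2:ℝ) ^ (-(n:ℝ) * RD d D (empDist x)) := by
        ring

end UpperAssemble

section MoreAux

variable {β : Type*} [Fintype β] {n : ℕ}

lemma exp_sum_coords (w : Fin n → β → ℝ) (hw : ∀ i, ∑ b, w i b = 1) (g : Fin n → β → ℝ) :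
    ∑ z : Fin n → β, (∏ i, w i (z i)) * (∑ i, g i (z i)) = ∑ i, ∑ b, w i b * g i b := by
  calc ∑ z : Fin n → β, (∏ i, w i (z i)) * (∑ i, g i (z i))
      = ∑ z : Fin n → β, ∑ j, (∏ i, w i (z i)) * g j (z j) := by
        apply Finset.sum_congr rfl
        intro z _
        rw [Finset.mul_sum]
    _ = ∑ j, ∑ z : Fin n → β, (∏ i, w i (z i)) * g j (z j) := Finset.sum_comm
    _ = ∑ j, ∑ b, w j b * g j b :=
        Finset.sum_congr rfl fun j _ => exp_coord w hw j (g j)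

lemma rpow2_sum {ι : Type*} (s : Finset ι) (f : ι → ℝ) :
    (2:ℝ) ^ (∑ i ∈ s, f i) = ∏ i ∈ s, (2:ℝ) ^ (f i) := by
  rw [Real.rpow_def_of_pos two_pos, Finset.mul_sum, Real.exp_sum]
  exact Finset.prod_congr rfl fun i _ => by rw [Real.rpow_def_of_pos two_pos]

end MoreAux

section Lower

variable {X Xh : Type*} [Fintype X] [Fintype Xh] [Nonempty Xh]

set_option maxHeartbeats 2000000 in
lemma lower_bound (d : X → Xh → ℝ) (D : ℝ)
    {n : ℕ} (hn : n ≠ 0) (x : Fin n → X)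
    (W : X → Xh → ℝ) (hW : IsCondPMF W)
    (bm : X → Xh) (hbm : ∀ a b, d a (bm a) ≤ d a b) (hbmD : ∀ a, d a (bm a) ≤ D)
    (lam : ℝ) (hlam : 0 < lam) (hlam1 : lam ≤ 1)
    (hdom : ∑ a, empDist x a * (∑ b, W a b * (d a b - d a (bm a)))
        ≤ (1 - lam) * (D - ∑ a, empDist x a * d a (bm a)))
    (mu : ℝ) (hmu : 0 < mu) (hmu1 : mu < 1)
    (ε₀ : ℝ) (hε₀ : 0 < ε₀) :
    (lam - (8 * (Fintype.card Xh : ℝ) / (Real.log 2)^2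
        + 2 * (Real.logb 2 (mu / (Fintype.card Xh : ℝ)))^2) / (n * ε₀^2))
      * (2:ℝ) ^ (-((n:ℝ) * (mutInf2 (empDist x) W + Real.logb 2 (1/(1-mu)) + ε₀)))
    ≤ ∑ z ∈ univ.filter (fun z : Fin n → Xh => dSeq d x z ≤ (n:ℝ) * D),
        (2:ℝ) ^ (-(n:ℝ) * empEnt z) := by
  have hnR : (0:ℝ) < n := by exact_mod_cast Nat.pos_of_ne_zero hn
  have hQ : IsPMF (empDist x) := empDist_isPMF hn x
  set Q := empDist x with hQdef
  have hcnt : ∀ a : X, (((univ.filter fun i => x i = a).card : ℕ) : ℝ) = (n:ℝ) * Q a := by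
    intro a
    rw [hQdef]
    exact (n_mul_empDist hn x a).symm
  set kk := (Fintype.card Xh : ℝ) with hkk
  have hkkpos : (0:ℝ) < kk := by
    rw [hkk]
    exact_mod_cast Fintype.card_pos
  set Cvar := 8 * kk / (Real.log 2)^2 + 2 * (Real.logb 2 (mu / kk))^2 with hCvar
  -- dispose of the easy case where the prefactor is nonpositive
  rcases le_or_gt (lam - Cvar / (n * ε₀^2)) 0 with hpre | hpre
  · calc (lam - Cvar / (n * ε₀^2)) * (2:ℝ) ^ (-((n:ℝ) * (mutInf2 Q W
          + Real.logb 2 (1/(1-mu)) + ε₀)))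
        ≤ 0 := mul_nonpos_of_nonpos_of_nonneg hpre (Real.rpow_pos_of_pos two_pos _).le
      _ ≤ _ := Finset.sum_nonneg fun z _ => (rpow_negEnt_pos hn z).le
  -- the smoothed output distribution
  set M : Xh → ℝ := fun b => ∑ a, Q a * W a b with hM
  set q' : Xh → ℝ := fun b => (1 - mu) * M b + mu / kk with hq'
  have hMnn : ∀ b, 0 ≤ M b := marg_nonneg hQ hW
  have hMsum : ∑ b, M b = 1 := marg_sum_one hQ hW
  have hq'pos : ∀ b, 0 < q' b := by
    intro b
    have h1 : 0 ≤ (1 - mu) * M b := mul_nonneg (by linarith) (hMnn b)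
    have h2 : 0 < mu / kk := by positivity
    simp only [hq']
    linarith
  have hq'lb : ∀ b, mu / kk ≤ q' b := by
    intro b
    have h1 : 0 ≤ (1 - mu) * M b := mul_nonneg (by linarith) (hMnn b)
    simp only [hq']
    linarith
  have hq'sum : ∑ b, q' b = 1 := by
    simp only [hq']
    rw [Finset.sum_add_distrib, ← Finset.mul_sum, hMsum, Finset.sum_const, Finset.card_univ,
      nsmul_eq_mul, ← hkk]
    field_simp
    ring
  set c := Real.logb 2 (1/(1-mu)) with hc
  have hc0 : 0 ≤ c := by
    apply Real.logb_nonneg one_lt_two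
    rw [le_div_iff₀ (by linarith : (0:ℝ) < 1 - mu)]
    linarith
  have h2c : (2:ℝ) ^ c = 1/(1-mu) :=
    Real.rpow_logb two_pos (by norm_num)
      (by
        have : (0:ℝ) < 1 - mu := by linarith
        positivity)
  have hq'M : ∀ b, M b ≤ q' b * (2:ℝ) ^ c := by
    intro b
    rw [h2c]
    have h1 : (1 - mu) * M b ≤ q' b := by
      have h2 : 0 < mu / kk := by positivity
      simp only [hq']
      linarith
    rw [mul_one_div, le_div_iff₀ (by linarith : (0:ℝ) < 1 - mu)]
    calc M b * (1 - mu) = (1 - mu) * M b := by ring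
      _ ≤ q' b := h1
  -- the product measure and the log-likelihood statistics
  set w : Fin n → Xh → ℝ := fun i => W (x i) with hw
  have hwsum : ∀ i, ∑ b, w i b = 1 := fun i => (hW (x i)).2
  have hwnn : ∀ i b, 0 ≤ w i b := fun i b => (hW (x i)).1 b
  set P : (Fin n → Xh) → ℝ := fun z => ∏ i, w i (z i) with hP
  have hPnn : ∀ z, 0 ≤ P z := fun z => Finset.prod_nonneg fun i _ => hwnn i (z i)
  have hPsum : ∑ z : Fin n → Xh, P z = 1 := sum_pi_prod_one w hwsum
  set ℓ : Fin n → Xh → ℝ := fun i b => Real.logb 2 (W (x i) b / q' b) with hℓ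
  set L : (Fin n → Xh) → ℝ := fun z => ∑ i, ℓ i (z i) with hL
  set m : ℝ := ∑ i, ∑ b, w i b * ℓ i b with hm
  -- (A) bound on the mean m
  have hmean : m ≤ (n:ℝ) * (mutInf2 Q W + c) := by
    have h1 : m = ∑ i, (fun a => ∑ b, W a b * Real.logb 2 (W a b / q' b)) (x i) := rfl
    have h3 : m = (n:ℝ) * ∑ a, Q a * (∑ b, W a b * Real.logb 2 (W a b / q' b)) := by
      rw [h1, sum_comp_eq_sum_card x (fun a => ∑ b, W a b * Real.logb 2 (W a b / q' b)),
        Finset.mul_sum]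
      apply Finset.sum_congr rfl
      intro a _
      rw [hcnt a]
      ring
    rw [h3]
    apply mul_le_mul_of_nonneg_left _ hnR.le
    exact exp_log_ratio_le hQ hW q' c hq'pos hq'M
  -- (B) variance bound
  have hvar : ∑ i, ∑ b, w i b * (ℓ i b - ∑ b', w i b' * ℓ i b')^2 ≤ (n:ℝ) * Cvar := by
    have hrow : ∀ i : Fin n, ∑ b, w i b * (ℓ i b - ∑ b', w i b' * ℓ i b')^2 ≤ Cvar := by
      intro i
      calc ∑ b, w i b * (ℓ i b - ∑ b', w i b' * ℓ i b')^2
          ≤ ∑ b, w i b * (ℓ i b)^2 := centered_second_moment_le (hW (x i)) (ℓ i)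
        _ ≤ Cvar := by
            rw [hCvar]
            exact row_second_moment_le (hW (x i)) hq'pos
              (fun b => (Finset.single_le_sum (fun b' _ => (hq'pos b').le)
                (Finset.mem_univ b)).trans (le_of_eq hq'sum))
              (by positivity) hq'lb
    calc ∑ i, ∑ b, w i b * (ℓ i b - ∑ b', w i b' * ℓ i b')^2
        ≤ ∑ _i : Fin n, Cvar := Finset.sum_le_sum fun i _ => hrow i
      _ = (n:ℝ) * Cvar := by
          rw [Finset.sum_const, Finset.card_univ, Fintype.card_fin, nsmul_eq_mul]
  -- (C) Chebyshev for the typical set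
  have hcheb : ∑ z ∈ univ.filter (fun z : Fin n → Xh => m + (n:ℝ) * ε₀ < L z), P z
      ≤ Cvar / ((n:ℝ) * ε₀^2) := by
    have h1 := finset_chebyshev P L hPnn (m := m) (t := (n:ℝ) * ε₀) (by positivity)
    have h2 : ∑ z : Fin n → Xh, P z * (L z - m)^2
        = ∑ i, ∑ b, w i b * (ℓ i b - ∑ b', w i b' * ℓ i b')^2 := by
      rw [← var_sum_coords w hwsum ℓ]
      apply Finset.sum_congr rfl
      intro z _
      rw [hL, hm, ← Finset.sum_sub_distrib]
    calc ∑ z ∈ univ.filter (fun z : Fin n → Xh => m + (n:ℝ) * ε₀ < L z), P z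
        ≤ (∑ z : Fin n → Xh, P z * (L z - m)^2) / ((n:ℝ) * ε₀)^2 := h1
      _ ≤ ((n:ℝ) * Cvar) / ((n:ℝ) * ε₀)^2 := by
          apply div_le_div_of_nonneg_right _ (by positivity)
          rw [h2]
          exact hvar
      _ = Cvar / ((n:ℝ) * ε₀^2) := by
          field_simp
  -- (D) Markov for the distortion event
  have hmarkov : ∑ z ∈ univ.filter
      (fun z : Fin n → Xh => ¬ (dSeq d x z ≤ (n:ℝ) * D)), P z ≤ 1 - lam := by
    set Dmin : ℝ := ∑ a, Q a * d a (bm a) with hDmin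
    have hSB : ∑ i, d (x i) (bm (x i)) = (n:ℝ) * Dmin := by
      rw [sum_comp_eq_sum_card x (fun a => d a (bm a)), hDmin, Finset.mul_sum]
      apply Finset.sum_congr rfl
      intro a _
      rw [hcnt a]
      ring
    set Y : (Fin n → Xh) → ℝ := fun z => dSeq d x z - (n:ℝ) * Dmin with hY
    have hYnn : ∀ z, 0 ≤ Y z := by
      intro z
      rw [hY]
      simp only
      rw [← hSB, sub_nonneg]
      unfold dSeq
      exact Finset.sum_le_sum fun i _ => hbm (x i) (z i)
    have hEY : ∑ z : Fin n → Xh, P z * Y z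
        ≤ (1 - lam) * ((n:ℝ) * (D - Dmin)) := by
      have h1 : ∑ z : Fin n → Xh, P z * Y z
          = (∑ z : Fin n → Xh, P z * dSeq d x z) - (n:ℝ) * Dmin := by
        have : ∀ z : Fin n → Xh, P z * Y z = P z * dSeq d x z - (n:ℝ) * Dmin * P z := by
          intro z
          rw [hY]
          ring
        rw [Finset.sum_congr rfl fun z _ => this z, Finset.sum_sub_distrib, ← Finset.mul_sum,
          hPsum, mul_one]
      have h2 : ∑ z : Fin n → Xh, P z * dSeq d x z
          = ∑ i, ∑ b, w i b * d (x i) b := by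
        have := exp_sum_coords w hwsum (fun i b => d (x i) b)
        rw [← this]
        rfl
      have h3 : ∑ i, ∑ b, w i b * d (x i) b
          = (n:ℝ) * ∑ a, Q a * (∑ b, W a b * d a b) := by
        rw [sum_comp_eq_sum_card x (fun a => ∑ b, W a b * d a b), Finset.mul_sum]
        apply Finset.sum_congr rfl
        intro a _
        rw [hcnt a]
        ring
      have h4 : ∑ a, Q a * (∑ b, W a b * d a b) - Dmin
          = ∑ a, Q a * (∑ b, W a b * (d a b - d a (bm a))) := by
        rw [hDmin, ← Finset.sum_sub_distrib]
        apply Finset.sum_congr rfl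
        intro a _
        have : ∑ b, W a b * (d a b - d a (bm a))
            = (∑ b, W a b * d a b) - (∑ b, W a b) * d a (bm a) := by
          rw [Finset.sum_mul, ← Finset.sum_sub_distrib]
          exact Finset.sum_congr rfl fun b _ => by ring
        rw [this, (hW a).2, one_mul]
        ring
      rw [h1, h2, h3]
      calc (n:ℝ) * ∑ a, Q a * (∑ b, W a b * d a b) - (n:ℝ) * Dmin
          = (n:ℝ) * (∑ a, Q a * (∑ b, W a b * (d a b - d a (bm a)))) := by
            rw [← h4]
            ring
        _ ≤ (n:ℝ) * ((1 - lam) * (D - Dmin)) := by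
            apply mul_le_mul_of_nonneg_left _ hnR.le
            exact hdom
        _ = (1 - lam) * ((n:ℝ) * (D - Dmin)) := by ring
    have hDminD : Dmin ≤ D := by
      calc Dmin = ∑ a, Q a * d a (bm a) := hDmin
        _ ≤ ∑ a, Q a * D := Finset.sum_le_sum fun a _ =>
            mul_le_mul_of_nonneg_left (hbmD a) (hQ.1 a)
        _ = D := by rw [← Finset.sum_mul, hQ.2, one_mul]
    have hsetseq : univ.filter (fun z : Fin n → Xh => ¬ (dSeq d x z ≤ (n:ℝ) * D))
        = univ.filter (fun z : Fin n → Xh => (n:ℝ) * (D - Dmin) < Y z) := by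
      ext z
      simp only [Finset.mem_filter, Finset.mem_univ, true_and, not_le]
      have hYz : Y z = dSeq d x z - (n:ℝ) * Dmin := rfl
      rw [hYz]
      constructor
      · intro h
        nlinarith
      · intro h
        nlinarith
    rw [hsetseq]
    rcases eq_or_lt_of_le (sub_nonneg.mpr hDminD) with hT | hT
    · -- D = Dmin : deterministic case
      have hEY0 : ∑ z : Fin n → Xh, P z * Y z ≤ 0 := by
        rw [← hT] at hEY
        simpa using hEY
      have h0 : univ.filter (fun z : Fin n → Xh => (n:ℝ) * (D - Dmin) < Y z)
          = univ.filter (fun z : Fin n → Xh => 0 < Y z) := by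
        ext z
        simp only [Finset.mem_filter, Finset.mem_univ, true_and]
        rw [← hT, mul_zero]
      rw [h0]
      calc ∑ z ∈ univ.filter (fun z : Fin n → Xh => 0 < Y z), P z
          ≤ 0 := finset_markov_zero P Y hPnn hYnn hEY0
        _ ≤ 1 - lam := by linarith
    · have hTpos : 0 < (n:ℝ) * (D - Dmin) := by positivity
      calc ∑ z ∈ univ.filter (fun z : Fin n → Xh => (n:ℝ) * (D - Dmin) < Y z), P z
          ≤ (∑ z : Fin n → Xh, P z * Y z) / ((n:ℝ) * (D - Dmin)) :=
            finset_markov P Y hPnn hYnn hTpos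
        _ ≤ ((1 - lam) * ((n:ℝ) * (D - Dmin))) / ((n:ℝ) * (D - Dmin)) :=
            div_le_div_of_nonneg_right hEY hTpos.le
        _ = 1 - lam := by field_simp
  -- (E) the good event has probability at least lam - Cvar/(n ε₀²)
  set A : Finset (Fin n → Xh) := univ.filter (fun z => dSeq d x z ≤ (n:ℝ) * D) with hA
  set B : Finset (Fin n → Xh) := univ.filter (fun z => L z ≤ m + (n:ℝ) * ε₀) with hB
  have hgood : lam - Cvar / ((n:ℝ) * ε₀^2) ≤ ∑ z ∈ A ∩ B, P z := by
    have h1 : ∑ z ∈ A ∩ B, P z + ∑ z ∈ univ \ (A ∩ B), P z = 1 := by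
      have h := Finset.sum_inter_add_sum_sdiff univ (A ∩ B) P
      rw [Finset.univ_inter] at h
      rw [h, hPsum]
    have h2 : univ \ (A ∩ B)
        ⊆ (univ.filter (fun z : Fin n → Xh => ¬ (dSeq d x z ≤ (n:ℝ) * D)))
          ∪ (univ.filter (fun z : Fin n → Xh => m + (n:ℝ) * ε₀ < L z)) := by
      intro z hz
      rw [Finset.mem_sdiff, Finset.mem_inter] at hz
      rw [Finset.mem_union, Finset.mem_filter, Finset.mem_filter]
      have := hz.2
      by_cases hzA : z ∈ A
      · right
        refine ⟨Finset.mem_univ z, ?_⟩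
        have hzB : z ∉ B := fun hB' => this ⟨hzA, hB'⟩
        rw [hB, Finset.mem_filter] at hzB
        push_neg at hzB
        exact hzB (Finset.mem_univ z)
      · left
        rw [hA, Finset.mem_filter] at hzA
        push_neg at hzA
        exact ⟨Finset.mem_univ z, fun hc => (hzA (Finset.mem_univ z)).not_ge hc⟩
    have h3 : ∑ z ∈ univ \ (A ∩ B), P z
        ≤ (1 - lam) + Cvar / ((n:ℝ) * ε₀^2) := by
      calc ∑ z ∈ univ \ (A ∩ B), P z
          ≤ ∑ z ∈ (univ.filter (fun z : Fin n → Xh => ¬ (dSeq d x z ≤ (n:ℝ) * D)))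
              ∪ (univ.filter (fun z : Fin n → Xh => m + (n:ℝ) * ε₀ < L z)), P z :=
            Finset.sum_le_sum_of_subset_of_nonneg h2 fun z _ _ => hPnn z
        _ ≤ ∑ z ∈ univ.filter (fun z : Fin n → Xh => ¬ (dSeq d x z ≤ (n:ℝ) * D)), P z
              + ∑ z ∈ univ.filter (fun z : Fin n → Xh => m + (n:ℝ) * ε₀ < L z), P z := by
            have := Finset.sum_union_inter
              (s₁ := univ.filter (fun z : Fin n → Xh => ¬ (dSeq d x z ≤ (n:ℝ) * D)))
              (s₂ := univ.filter (fun z : Fin n → Xh => m + (n:ℝ) * ε₀ < L z)) (f := P)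
            have hnn : 0 ≤ ∑ z ∈ (univ.filter (fun z : Fin n → Xh =>
                ¬ (dSeq d x z ≤ (n:ℝ) * D)))
                ∩ (univ.filter (fun z : Fin n → Xh => m + (n:ℝ) * ε₀ < L z)), P z :=
              Finset.sum_nonneg fun z _ => hPnn z
            linarith
        _ ≤ (1 - lam) + Cvar / ((n:ℝ) * ε₀^2) := add_le_add hmarkov hcheb
    linarith
  -- (F) final chain
  have hq'sum_le : ∑ b, q' b ≤ 1 := le_of_eq hq'sum
  have key1 : ∀ z ∈ A ∩ B, (2:ℝ) ^ (-((m + (n:ℝ) * ε₀))) * P z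
      ≤ (2:ℝ) ^ (-(n:ℝ) * empEnt z) := by
    intro z hz
    rw [Finset.mem_inter] at hz
    have hzB' := hz.2
    rw [hB, Finset.mem_filter] at hzB'
    have hzB : L z ≤ m + (n:ℝ) * ε₀ := hzB'.2
    have step_a : ∏ i, (w i (z i) * (2:ℝ) ^ (-(ℓ i (z i)))) ≤ ∏ i, q' (z i) := by
      apply Finset.prod_le_prod
      · intro i _
        exact mul_nonneg (hwnn i (z i)) (Real.rpow_pos_of_pos two_pos _).le
      · intro i _
        rcases eq_or_lt_of_le (hwnn i (z i)) with h | h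
        · rw [← h, zero_mul]
          exact (hq'pos (z i)).le
        · apply le_of_eq
          have hWpos : 0 < W (x i) (z i) := h
          have hl : ℓ i (z i) = Real.logb 2 (W (x i) (z i) / q' (z i)) := rfl
          have hww : w i (z i) = W (x i) (z i) := rfl
          rw [hl, Real.rpow_neg (by norm_num), Real.rpow_logb two_pos (by norm_num)
            (div_pos hWpos (hq'pos (z i))), hww]
          field_simp
    have step_b : ∏ i, (w i (z i) * (2:ℝ) ^ (-(ℓ i (z i))))
        = P z * (2:ℝ) ^ (-(L z)) := by
      rw [Finset.prod_mul_distrib, hP]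
      congr 1
      rw [hL]
      simp only
      rw [← Finset.sum_neg_distrib, rpow2_sum]
    have step_c : ∏ i, q' (z i) ≤ ∏ i, empDist z (z i) :=
      prod_le_prod_emp hn z q' hq'pos hq'sum_le
    have step_d : (2:ℝ) ^ (-((m + (n:ℝ) * ε₀))) * P z ≤ P z * (2:ℝ) ^ (-(L z)) := by
      rw [mul_comm]
      apply mul_le_mul_of_nonneg_left _ (hPnn z)
      exact Real.rpow_le_rpow_of_exponent_le one_le_two (by linarith)
    calc (2:ℝ) ^ (-((m + (n:ℝ) * ε₀))) * P z
        ≤ P z * (2:ℝ) ^ (-(L z)) := step_d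
      _ = ∏ i, (w i (z i) * (2:ℝ) ^ (-(ℓ i (z i)))) := step_b.symm
      _ ≤ ∏ i, q' (z i) := step_a
      _ ≤ ∏ i, empDist z (z i) := step_c
      _ = (2:ℝ) ^ (-(n:ℝ) * empEnt z) := (rpow_negEnt_eq_prod' hn z).symm
  calc (lam - Cvar / ((n:ℝ) * ε₀^2))
        * (2:ℝ) ^ (-((n:ℝ) * (mutInf2 Q W + c + ε₀)))
      ≤ (lam - Cvar / ((n:ℝ) * ε₀^2)) * (2:ℝ) ^ (-((m + (n:ℝ) * ε₀))) := by
        apply mul_le_mul_of_nonneg_left _ hpre.le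
        apply Real.rpow_le_rpow_of_exponent_le one_le_two
        have : m + (n:ℝ) * ε₀ ≤ (n:ℝ) * (mutInf2 Q W + c + ε₀) := by
          have := hmean
          nlinarith
        linarith
    _ ≤ (∑ z ∈ A ∩ B, P z) * (2:ℝ) ^ (-((m + (n:ℝ) * ε₀))) :=
        mul_le_mul_of_nonneg_right hgood (Real.rpow_pos_of_pos two_pos _).le
    _ = ∑ z ∈ A ∩ B, (2:ℝ) ^ (-((m + (n:ℝ) * ε₀))) * P z := by
        rw [Finset.sum_mul]
        exact Finset.sum_congr rfl fun z _ => by ring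
    _ ≤ ∑ z ∈ A ∩ B, (2:ℝ) ^ (-(n:ℝ) * empEnt z) := Finset.sum_le_sum key1
    _ ≤ ∑ z ∈ A, (2:ℝ) ^ (-(n:ℝ) * empEnt z) := by
        apply Finset.sum_le_sum_of_subset_of_nonneg (Finset.inter_subset_left)
        intro z _ _
        exact (rpow_negEnt_pos hn z).le
    _ = ∑ z ∈ univ.filter (fun z : Fin n → Xh => dSeq d x z ≤ (n:ℝ) * D),
          (2:ℝ) ^ (-(n:ℝ) * empEnt z) := rfl

end Lower

section Final

lemma exists_N_bound (A B δ : ℝ) (hA : 0 ≤ A) (hB : 0 ≤ B) (hδ : 0 < δ) :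
    ∃ N : ℕ, 0 < N ∧ ∀ n : ℕ, N ≤ n → A * Real.logb 2 ((n:ℝ) + 1) + B ≤ (n:ℝ) * δ := by
  have hlog2 : (0:ℝ) < Real.log 2 := Real.log_pos one_lt_two
  set r : ℝ := 8 * A / (δ * Real.log 2) with hr
  have hr0 : 0 ≤ r := by positivity
  refine ⟨max 1 (max (Nat.ceil (r ^ 2)) (Nat.ceil (2 * B / δ))) + 1, by positivity, ?_⟩
  intro n hn
  have hn1 : (1:ℕ) ≤ n := by omega
  have hnR1 : (1:ℝ) ≤ (n:ℝ) := by exact_mod_cast hn1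
  have hnR0 : (0:ℝ) ≤ (n:ℝ) := by linarith
  have hsq : Real.sqrt n * Real.sqrt n = (n:ℝ) := Real.mul_self_sqrt hnR0
  have hs1 : (1:ℝ) ≤ Real.sqrt n := by
    rw [show (1:ℝ) = Real.sqrt 1 by simp]
    exact Real.sqrt_le_sqrt hnR1
  -- log bound
  have hlogb : Real.logb 2 ((n:ℝ) + 1) ≤ 4 * Real.sqrt n / Real.log 2 := by
    have h1 : Real.sqrt ((n:ℝ) + 1) ≤ Real.sqrt n + 1 := by
      calc Real.sqrt ((n:ℝ) + 1) ≤ Real.sqrt ((Real.sqrt n + 1) ^ 2) := by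
            apply Real.sqrt_le_sqrt
            nlinarith
        _ = Real.sqrt n + 1 := Real.sqrt_sq (by positivity)
    have h2 : Real.log ((n:ℝ) + 1) ≤ 2 * Real.sqrt ((n:ℝ) + 1) := by
      have h3 : Real.log ((n:ℝ) + 1) = 2 * Real.log (Real.sqrt ((n:ℝ) + 1)) := by
        rw [Real.log_sqrt (by linarith)]
        ring
      rw [h3]
      have h4 := Real.log_le_sub_one_of_pos
        (show (0:ℝ) < Real.sqrt ((n:ℝ)+1) by positivity)
      linarith
    have h5 : Real.log ((n:ℝ) + 1) ≤ 4 * Real.sqrt n := by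
      calc Real.log ((n:ℝ) + 1) ≤ 2 * Real.sqrt ((n:ℝ) + 1) := h2
        _ ≤ 2 * (Real.sqrt n + 1) := by linarith
        _ ≤ 4 * Real.sqrt n := by linarith
    rw [Real.logb]
    exact div_le_div_of_nonneg_right h5 hlog2.le
  -- numeric bounds from the ceilings
  have hceil1 : r ^ 2 ≤ (n:ℝ) := by
    have h1 : Nat.ceil (r ^ 2) ≤ n := by omega
    calc r ^ 2 ≤ (Nat.ceil (r ^ 2) : ℝ) := Nat.le_ceil _
      _ ≤ (n:ℝ) := by exact_mod_cast h1
  have hceil2 : 2 * B / δ ≤ (n:ℝ) := by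
    have h1 : Nat.ceil (2 * B / δ) ≤ n := by omega
    calc 2 * B / δ ≤ (Nat.ceil (2 * B / δ) : ℝ) := Nat.le_ceil _
      _ ≤ (n:ℝ) := by exact_mod_cast h1
  have hrs : r ≤ Real.sqrt n := by
    nlinarith [Real.sqrt_nonneg (n:ℝ)]
  -- combine
  have hAbound : A * Real.logb 2 ((n:ℝ) + 1) ≤ δ / 2 * (n:ℝ) := by
    have h1 : A * Real.logb 2 ((n:ℝ) + 1) ≤ A * (4 * Real.sqrt n / Real.log 2) :=
      mul_le_mul_of_nonneg_left hlogb hA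
    have h2 : δ / 2 * r = 4 * A / Real.log 2 := by
      rw [hr]
      field_simp
      ring
    have h3 : A * (4 * Real.sqrt n / Real.log 2) = (δ / 2 * r) * Real.sqrt n := by
      rw [h2]
      field_simp
    have h4 : (δ / 2 * r) * Real.sqrt n ≤ (δ / 2) * ((Real.sqrt n) * (Real.sqrt n)) := by
      have h5 := mul_le_mul_of_nonneg_right hrs (Real.sqrt_nonneg (n:ℝ))
      nlinarith
    rw [hsq] at h4
    linarith
  have hBbound : B ≤ δ / 2 * (n:ℝ) := by
    rw [div_le_iff₀ hδ] at hceil2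
    linarith
  linarith

set_option maxHeartbeats 2000000 in
theorem univDist_ball_exponent' {X Xh : Type*} [Fintype X] [Fintype Xh]
    (d : X → Xh → ℝ) (hd : ∀ x xh, 0 ≤ d x xh) (D : ℝ) (hD : 0 ≤ D)
    (hcover : ∀ x : X, ∃ xh : Xh, d x xh ≤ D) :
    ∀ ε > 0, ∃ N : ℕ, ∀ n ≥ N, ∀ x : Fin n → X,
      |(1 / (n : ℝ)) * Real.logb 2 (univDistBall d D x) + RD d D (empDist x)| < ε := by
  intro ε hε
  by_cases hX : Nonempty X
  swap
  · refine ⟨1, ?_⟩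
    intro n hn x
    exact absurd ⟨x ⟨0, by omega⟩⟩ hX
  have hXh : Nonempty Xh := by
    obtain ⟨a⟩ := hX
    obtain ⟨b, _⟩ := hcover a
    exact ⟨b⟩
  -- constants
  set ε₀ : ℝ := ε / 8 with hε₀def
  have hε₀ : 0 < ε₀ := by positivity
  obtain ⟨δ, hδ, hδspec⟩ := mutInf2_perturb (X := X) (Xh := Xh) ε₀ hε₀
  set lam : ℝ := min (1/2) δ with hlam_def
  have hlam : 0 < lam := lt_min (by norm_num) hδ
  have hlam1 : lam ≤ 1 := (min_le_left _ _).trans (by norm_num)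
  have hlamδ : lam ≤ δ := min_le_right _ _
  set mu : ℝ := 1 - (2:ℝ) ^ (-ε₀) with hmu_def
  have h2e : (0:ℝ) < (2:ℝ) ^ (-ε₀) := Real.rpow_pos_of_pos two_pos _
  have h2e1 : (2:ℝ) ^ (-ε₀) < 1 :=
    Real.rpow_lt_one_of_one_lt_of_neg one_lt_two (by linarith)
  have hmu : 0 < mu := by rw [hmu_def]; linarith
  have hmu1 : mu < 1 := by rw [hmu_def]; linarith
  have hcval : Real.logb 2 (1 / (1 - mu)) = ε₀ := by
    have h1 : 1 - mu = (2:ℝ) ^ (-ε₀) := by rw [hmu_def]; ring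
    rw [h1, one_div, ← Real.rpow_neg (by norm_num), neg_neg,
      Real.logb_rpow two_pos (by norm_num)]
  set kk : ℝ := (Fintype.card Xh : ℝ) with hkk
  have hkkpos : (0:ℝ) < kk := by rw [hkk]; exact_mod_cast Fintype.card_pos
  set Cvar : ℝ := 8 * kk / (Real.log 2)^2 + 2 * (Real.logb 2 (mu / kk))^2 with hCvar
  have hCvar0 : 0 ≤ Cvar := by positivity
  -- thresholds
  obtain ⟨N₁, hN₁pos, hN₁⟩ := exists_N_bound ((Fintype.card (X × Xh) : ℝ)) 0 (ε/2)
    (by positivity) le_rfl (by positivity)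
  obtain ⟨N₂, hN₂pos, hN₂⟩ := exists_N_bound kk (Real.logb 2 (2 / lam)) (ε/4)
    hkkpos.le (Real.logb_nonneg one_lt_two (by rw [le_div_iff₀ hlam]; linarith))
    (by positivity)
  set N₃ : ℕ := Nat.ceil (2 * Cvar / (lam * ε₀ ^ 2)) + 1 with hN₃def
  refine ⟨max N₁ (max N₂ N₃), ?_⟩
  intro n hn x
  have hnN₁ : N₁ ≤ n := le_trans (le_max_left _ _) hn
  have hnN₂ : N₂ ≤ n := le_trans ((le_max_left _ _).trans (le_max_right _ _)) hn
  have hnN₃ : N₃ ≤ n := le_trans ((le_max_right _ _).trans (le_max_right _ _)) hn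
  have hn0 : n ≠ 0 := by omega
  have hnR : (0:ℝ) < n := by exact_mod_cast Nat.pos_of_ne_zero hn0
  have hQ : IsPMF (empDist x) := empDist_isPMF hn0 x
  set R : ℝ := RD d D (empDist x) with hR
  have hR0 : 0 ≤ R := RD_nonneg hcover hQ
  -- Z bounds
  set Z : ℝ := ∑ z : Fin n → Xh, (2:ℝ) ^ (-(n:ℝ) * empEnt z) with hZ
  have hZ1 : 1 ≤ Z := Z_ge_one hn0
  have hZ0 : 0 < Z := lt_of_lt_of_le one_pos hZ1
  have hZle : Z ≤ ((n:ℝ) + 1) ^ (Fintype.card Xh) := Z_le_pow hn0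
  -- numerator
  set Bsum : ℝ := ∑ z ∈ univ.filter (fun z : Fin n → Xh => dSeq d x z ≤ (n:ℝ) * D),
    (2:ℝ) ^ (-(n:ℝ) * empEnt z) with hBsum
  -- the ball probability equals Bsum / Z
  have hball : univDistBall d D x = Bsum / Z := by
    unfold univDistBall univDist
    rw [hBsum, Finset.sum_div]
  -- near-optimal channel and the mixed channel
  obtain ⟨W₀, hW₀pmf, hW₀dist, hW₀I⟩ := RD_exists_near hcover hQ hε₀
  have hbm_ex : ∀ a : X, ∃ b : Xh, ∀ b' : Xh, d a b ≤ d a b' := by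
    intro a
    obtain ⟨b, _, hb⟩ := Finset.exists_min_image univ (d a)
      ⟨Classical.arbitrary Xh, Finset.mem_univ _⟩
    exact ⟨b, fun b' => hb b' (Finset.mem_univ b')⟩
  choose bm hbm using hbm_ex
  have hbmD : ∀ a, d a (bm a) ≤ D := by
    intro a
    obtain ⟨b, hb⟩ := hcover a
    exact (hbm a b).trans hb
  set Wmix : X → Xh → ℝ :=
    fun a b => (1 - lam) * W₀ a b + lam * (if b = bm a then 1 else 0) with hWmix
  have hWmixpmf : IsCondPMF Wmix := by
    intro a
    constructor
    · intro b
      have h1 : 0 ≤ W₀ a b := (hW₀pmf a).1 b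
      have h2 : (0:ℝ) ≤ (if b = bm a then (1:ℝ) else 0) := by split <;> norm_num
      have h3 : 0 ≤ 1 - lam := by linarith
      simp only [hWmix]
      positivity
    · simp only [hWmix]
      rw [Finset.sum_add_distrib, ← Finset.mul_sum, ← Finset.mul_sum, (hW₀pmf a).2,
        Finset.sum_ite_eq' univ (bm a) (fun _ => (1:ℝ))]
      simp
  have hWmixclose : ∀ a b, |W₀ a b - Wmix a b| ≤ δ := by
    intro a b
    have h1 : W₀ a b - Wmix a b = lam * (W₀ a b - (if b = bm a then 1 else 0)) := by
      simp only [hWmix]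
      ring
    rw [h1, abs_mul, abs_of_pos hlam]
    have h2 : |W₀ a b - (if b = bm a then 1 else 0)| ≤ 1 := by
      have h3 : 0 ≤ W₀ a b := (hW₀pmf a).1 b
      have h4 : W₀ a b ≤ 1 := (hW₀pmf a).le_one' b
      rw [abs_le]
      split <;> constructor <;> linarith
    calc lam * |W₀ a b - (if b = bm a then 1 else 0)| ≤ lam * 1 :=
          mul_le_mul_of_nonneg_left h2 hlam.le
      _ ≤ δ := by linarith
  have hImix : mutInf2 (empDist x) Wmix ≤ mutInf2 (empDist x) W₀ + ε₀ := by
    have := hδspec (empDist x) W₀ Wmix hQ hW₀pmf hWmixpmf hWmixclose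
    rw [abs_le] at this
    linarith [this.1]
  -- the domination hypothesis for the Markov step
  have hdom : ∑ a, empDist x a * (∑ b, Wmix a b * (d a b - d a (bm a)))
      ≤ (1 - lam) * (D - ∑ a, empDist x a * d a (bm a)) := by
    have h1 : ∀ a, ∑ b, Wmix a b * (d a b - d a (bm a))
        = (1 - lam) * ∑ b, W₀ a b * (d a b - d a (bm a)) := by
      intro a
      simp only [hWmix]
      rw [Finset.mul_sum]
      rw [Finset.sum_congr rfl (fun b (_ : b ∈ univ) => by
        show ((1 - lam) * W₀ a b + lam * (if b = bm a then 1 else 0)) * (d a b - d a (bm a))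
          = (1 - lam) * (W₀ a b * (d a b - d a (bm a)))
            + lam * ((if b = bm a then 1 else 0) * (d a b - d a (bm a)))
        ring), Finset.sum_add_distrib]
      have h2 : ∑ b, lam * ((if b = bm a then 1 else 0) * (d a b - d a (bm a))) = 0 := by
        apply Finset.sum_eq_zero
        intro b _
        rcases eq_or_ne b (bm a) with h | h
        · rw [h]; simp
        · rw [if_neg h]; ring
      rw [h2, add_zero]
    have h2 : ∀ a, ∑ b, W₀ a b * (d a b - d a (bm a))
        = (∑ b, W₀ a b * d a b) - d a (bm a) := by
      intro a
      rw [Finset.sum_congr rfl (fun b (_ : b ∈ univ) => by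
        show W₀ a b * (d a b - d a (bm a)) = W₀ a b * d a b - W₀ a b * d a (bm a)
        ring), Finset.sum_sub_distrib, ← Finset.sum_mul, (hW₀pmf a).2, one_mul]
    have h3 : ∑ a, empDist x a * (∑ b, Wmix a b * (d a b - d a (bm a)))
        = (1 - lam) * ((∑ a, empDist x a * (∑ b, W₀ a b * d a b))
            - ∑ a, empDist x a * d a (bm a)) := by
      rw [Finset.sum_congr rfl (fun a (_ : a ∈ univ) => by rw [h1 a, h2 a])]
      have h5 : ∀ a, empDist x a * ((1 - lam) * ((∑ b, W₀ a b * d a b) - d a (bm a)))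
          = (1 - lam) * (empDist x a * (∑ b, W₀ a b * d a b)
              - empDist x a * d a (bm a)) := fun a => by ring
      rw [Finset.sum_congr rfl (fun a (_ : a ∈ univ) => h5 a), ← Finset.mul_sum,
        Finset.sum_sub_distrib]
    rw [h3]
    have h4 : ∑ a, empDist x a * (∑ b, W₀ a b * d a b) ≤ D := by
      have h6 : ∑ a, empDist x a * (∑ b, W₀ a b * d a b)
          = ∑ a, ∑ b, empDist x a * W₀ a b * d a b := by
        apply Finset.sum_congr rfl
        intro a _
        rw [Finset.mul_sum]
        exact Finset.sum_congr rfl fun b _ => by ring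
      rw [h6]
      exact hW₀dist
    have h5 : (0:ℝ) ≤ 1 - lam := by linarith
    apply mul_le_mul_of_nonneg_left _ h5
    linarith
  -- apply the lower bound
  have hlower := lower_bound d D hn0 x Wmix hWmixpmf bm (fun a b => hbm a b) hbmD
    lam hlam hlam1 hdom mu hmu hmu1 ε₀ hε₀
  have hpref : lam / 2 ≤ lam - Cvar / ((n:ℝ) * ε₀ ^ 2) := by
    have h1 : 2 * Cvar / (lam * ε₀ ^ 2) ≤ (n:ℝ) := by
      have h2 : Nat.ceil (2 * Cvar / (lam * ε₀ ^ 2)) ≤ n := by omega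
      calc 2 * Cvar / (lam * ε₀ ^ 2) ≤ (Nat.ceil (2 * Cvar / (lam * ε₀ ^ 2)) : ℝ) :=
            Nat.le_ceil _
        _ ≤ (n:ℝ) := by exact_mod_cast h2
    rw [div_le_iff₀ (by positivity : (0:ℝ) < lam * ε₀ ^ 2)] at h1
    have h3 : Cvar / ((n:ℝ) * ε₀ ^ 2) ≤ lam / 2 := by
      rw [div_le_iff₀ (by positivity : (0:ℝ) < (n:ℝ) * ε₀ ^ 2)]
      have h8 : ∀ t c : ℝ, 2 * c ≤ t → c ≤ t / 2 := fun t c h => by linarith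
      exact le_trans (h8 _ _ h1) (le_of_eq (by ring))
    linarith
  have hexp : (n:ℝ) * (mutInf2 (empDist x) Wmix + Real.logb 2 (1/(1-mu)) + ε₀)
      ≤ (n:ℝ) * (R + 4 * ε₀) := by
    rw [hcval]
    apply mul_le_mul_of_nonneg_left _ hnR.le
    linarith [hImix, hW₀I]
  have hBlow : lam / 2 * (2:ℝ) ^ (-((n:ℝ) * (R + 4 * ε₀))) ≤ Bsum := by
    have h1 : (2:ℝ) ^ (-((n:ℝ) * (R + 4 * ε₀)))
        ≤ (2:ℝ) ^ (-((n:ℝ) * (mutInf2 (empDist x) Wmix + Real.logb 2 (1/(1-mu)) + ε₀))) :=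
      Real.rpow_le_rpow_of_exponent_le one_le_two (by linarith)
    calc lam / 2 * (2:ℝ) ^ (-((n:ℝ) * (R + 4 * ε₀)))
        ≤ (lam - Cvar / ((n:ℝ) * ε₀ ^ 2))
            * (2:ℝ) ^ (-((n:ℝ) * (mutInf2 (empDist x) Wmix
                + Real.logb 2 (1/(1-mu)) + ε₀))) := by
          apply mul_le_mul hpref h1 (Real.rpow_pos_of_pos two_pos _).le
          linarith [hpref, hlam]
      _ ≤ Bsum := hlower
  have hB0 : 0 < Bsum := lt_of_lt_of_le (by positivity) hBlow
  have hBup : Bsum ≤ ((n:ℝ) + 1) ^ (Fintype.card (X × Xh)) * (2:ℝ) ^ (-(n:ℝ) * R) :=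
    upper_bound hn0 d D x
  -- log bounds
  have hlog2n : 0 < ((n:ℝ) + 1) := by linarith
  have hlogZ0 : 0 ≤ Real.logb 2 Z := Real.logb_nonneg one_lt_two hZ1
  have hlogZup : Real.logb 2 Z ≤ kk * Real.logb 2 ((n:ℝ) + 1) := by
    calc Real.logb 2 Z ≤ Real.logb 2 (((n:ℝ) + 1) ^ (Fintype.card Xh)) :=
          Real.logb_le_logb_of_le one_lt_two hZ0 hZle
      _ = kk * Real.logb 2 ((n:ℝ) + 1) := by rw [Real.logb_pow, hkk]
  have hub : Real.logb 2 (univDistBall d D x)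
      ≤ (Fintype.card (X × Xh) : ℝ) * Real.logb 2 ((n:ℝ) + 1) - (n:ℝ) * R := by
    rw [hball, Real.logb_div (ne_of_gt hB0) (ne_of_gt hZ0)]
    have h1 : Real.logb 2 Bsum
        ≤ Real.logb 2 (((n:ℝ) + 1) ^ (Fintype.card (X × Xh)) * (2:ℝ) ^ (-(n:ℝ) * R)) :=
      Real.logb_le_logb_of_le one_lt_two hB0 hBup
    have h2 : Real.logb 2 (((n:ℝ) + 1) ^ (Fintype.card (X × Xh)) * (2:ℝ) ^ (-(n:ℝ) * R))
        = (Fintype.card (X × Xh) : ℝ) * Real.logb 2 ((n:ℝ) + 1) + (-(n:ℝ) * R) := by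
      rw [Real.logb_mul (by positivity) (by positivity), Real.logb_pow,
        Real.logb_rpow two_pos (by norm_num)]
    linarith
  have hlb : Real.logb 2 (lam / 2) - (n:ℝ) * (R + 4 * ε₀) - kk * Real.logb 2 ((n:ℝ) + 1)
      ≤ Real.logb 2 (univDistBall d D x) := by
    rw [hball, Real.logb_div (ne_of_gt hB0) (ne_of_gt hZ0)]
    have h1 : Real.logb 2 (lam / 2 * (2:ℝ) ^ (-((n:ℝ) * (R + 4 * ε₀))))
        ≤ Real.logb 2 Bsum :=
      Real.logb_le_logb_of_le one_lt_two (by positivity) hBlow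
    have h2 : Real.logb 2 (lam / 2 * (2:ℝ) ^ (-((n:ℝ) * (R + 4 * ε₀))))
        = Real.logb 2 (lam / 2) + (-((n:ℝ) * (R + 4 * ε₀))) := by
      rw [Real.logb_mul (by positivity) (by positivity),
        Real.logb_rpow two_pos (by norm_num)]
    linarith
  -- final arithmetic
  have hT : (1 / (n:ℝ)) * Real.logb 2 (univDistBall d D x) + R
      = (Real.logb 2 (univDistBall d D x) + (n:ℝ) * R) / n := by
    field_simp
  rw [hT, abs_lt]
  have hN1b := hN₁ n hnN₁
  have hN2b := hN₂ n hnN₂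
  have hloglam : Real.logb 2 (lam / 2) = - Real.logb 2 (2 / lam) := by
    rw [show lam / 2 = (2 / lam)⁻¹ by field_simp, Real.logb_inv]
  have h4 : 0 < (n:ℝ) * ε := mul_pos hnR hε
  constructor
  · rw [lt_div_iff₀ hnR]
    have hh : (n:ℝ) * (R + 4 * ε₀) = (n:ℝ) * R + (n:ℝ) * (4 * ε₀) := by ring
    have h1 : Real.logb 2 (univDistBall d D x) + (n:ℝ) * R
        ≥ Real.logb 2 (lam / 2) - kk * Real.logb 2 ((n:ℝ) + 1) - (n:ℝ) * (4 * ε₀) := by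
      linarith only [hlb, hh]
    rw [hloglam] at h1
    have h2 : kk * Real.logb 2 ((n:ℝ) + 1) + Real.logb 2 (2 / lam) ≤ (n:ℝ) * (ε/4) := hN2b
    have h3 : (n:ℝ) * (4 * ε₀) = (n:ℝ) * (ε/2) := by rw [hε₀def]; ring
    linarith only [h1, h2, h3, h4]
  · rw [div_lt_iff₀ hnR]
    have h2 : (Fintype.card (X × Xh) : ℝ) * Real.logb 2 ((n:ℝ) + 1) + 0 ≤ (n:ℝ) * (ε/2) :=
      hN1b
    linarith only [hub, h2, h4]

end Final



/-- Uniformly in `x ∈ 𝒳ⁿ`, the probability that a single guess drawn from the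
universal distribution `P̃` lands within distortion `D` of `x` is `2^{-n R(D, P̂_x)}` up to
sub-exponential factors:
`lim_{n→∞} max_{x ∈ 𝒳ⁿ} |(1/n) log₂ P̃[S(x)] + R(D, P̂_x)| = 0`. -/
theorem univDist_ball_exponent {X Xh : Type*} [Fintype X] [Fintype Xh]
    (d : X → Xh → ℝ) (hd : ∀ x xh, 0 ≤ d x xh) (D : ℝ) (hD : 0 ≤ D)
    (hcover : ∀ x : X, ∃ xh : Xh, d x xh ≤ D) :
    ∀ ε > 0, ∃ N : ℕ, ∀ n ≥ N, ∀ x : Fin n → X,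
      |(1 / (n : ℝ)) * Real.logb 2 (univDistBall d D x) + RD d D (empDist x)| < ε :=
  univDist_ball_exponent' d hd D hD hcover
end

section
/- Assume for every x ∈ 𝒳 there exists x̂ ∈ 𝒳̂ with d(x,x̂) = 0, and fix δ > 0 and ε > 0 with δ ≤ D. Then there exists a sequence ε_n → 0 such that for every n and every x ∈ 𝒳^n the following holds: letting P*(x̂|x) be any conditional distribution achieving R(D−δ, P̂_x) and Q(x̂) = Σ_{x∈𝒳} P̂_x(x) P*(x̂|x) the induced reconstruction distribution, one has Σ_{x̂ ∈ 𝒳̂^n : d(x,x̂) ≤ nD} Π_{i=1}^n Q(x̂_i) ≥ (1 − 2ε_n) · 2^{−n [R(D−δ, P̂_x) + ε]}. -/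
open scoped BigOperators Classical
open Filter

section AuxLemmas

namespace RDproof

variable {X Xh : Type*} [Fintype X] [Fintype Xh]

lemma sum_pi_succ {n : ℕ} (F : (Fin (n+1) → Xh) → ℝ) :
    ∑ ω : Fin (n+1) → Xh, F ω = ∑ b : Xh, ∑ ρ : Fin n → Xh, F (Fin.cons b ρ : Fin (n+1) → Xh) := by
  rw [← (Fintype.sum_equiv (Fin.consEquiv fun _ => Xh)
    (fun p => F ((Fin.consEquiv fun _ => Xh) p)) F (fun p => rfl)), Fintype.sum_prod_type]
  rfl

lemma tensor_sum : ∀ {n : ℕ} (W : Fin n → Xh → ℝ), (∀ i, ∑ b, W i b = 1) →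
    (∑ ω : Fin n → Xh, ∏ i, W i (ω i)) = 1 := by
  intro n
  induction n with
  | zero => intro W h; simp
  | succ m ih =>
    intro W hW
    rw [sum_pi_succ (fun ω => ∏ i, W i (ω i))]
    have h0 : ∀ (b : Xh) (ρ : Fin m → Xh),
        (∏ i : Fin (m+1), W i ((Fin.cons b ρ : Fin (m+1) → Xh) i))
          = W 0 b * ∏ i : Fin m, W i.succ (ρ i) := by
      intro b ρ; rw [Fin.prod_univ_succ]; simp
    simp_rw [h0, ← Finset.mul_sum, ih (fun i => W i.succ) (fun i => hW i.succ), mul_one]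
    exact hW 0

lemma tensor_mean : ∀ {n : ℕ} (W f : Fin n → Xh → ℝ), (∀ i, ∑ b, W i b = 1) →
    (∑ ω : Fin n → Xh, (∏ i, W i (ω i)) * (∑ i, f i (ω i)))
      = ∑ i, ∑ b, W i b * f i b := by
  intro n
  induction n with
  | zero => intro W f h; simp
  | succ m ih =>
    intro W f hW
    rw [sum_pi_succ (fun ω => (∏ i, W i (ω i)) * (∑ i, f i (ω i)))]
    have h0 : ∀ (b : Xh) (ρ : Fin m → Xh),
        ((∏ i : Fin (m+1), W i ((Fin.cons b ρ : Fin (m+1) → Xh) i))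
            * (∑ i : Fin (m+1), f i ((Fin.cons b ρ : Fin (m+1) → Xh) i)))
        = (W 0 b * ∏ i : Fin m, W i.succ (ρ i)) * (f 0 b + ∑ i : Fin m, f i.succ (ρ i)) := by
      intro b ρ; rw [Fin.prod_univ_succ, Fin.sum_univ_succ]; simp
    simp_rw [h0]
    have expand : ∀ (b : Xh) (ρ : Fin m → Xh),
        (W 0 b * ∏ i : Fin m, W i.succ (ρ i)) * (f 0 b + ∑ i : Fin m, f i.succ (ρ i))
        = (W 0 b * f 0 b) * (∏ i : Fin m, W i.succ (ρ i))
          + W 0 b * ((∏ i : Fin m, W i.succ (ρ i)) * (∑ i : Fin m, f i.succ (ρ i))) := by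
      intro b ρ; ring
    simp_rw [expand, Finset.sum_add_distrib, ← Finset.mul_sum,
      tensor_sum (fun i => W i.succ) (fun i => hW i.succ),
      ih (fun i => W i.succ) (fun i => f i.succ) (fun i => hW i.succ), mul_one,
      ← Finset.sum_mul, hW 0, one_mul, Fin.sum_univ_succ]

lemma tensor_var : ∀ {n : ℕ} (W f : Fin n → Xh → ℝ), (∀ i, ∑ b, W i b = 1) →
    (∀ i, ∑ b, W i b * f i b = 0) →
    (∑ ω : Fin n → Xh, (∏ i, W i (ω i)) * (∑ i, f i (ω i))^2)
      = ∑ i, ∑ b, W i b * (f i b)^2 := by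
  intro n
  induction n with
  | zero => intro W f h h'; simp
  | succ m ih =>
    intro W f hW hm
    rw [sum_pi_succ (fun ω => (∏ i, W i (ω i)) * (∑ i, f i (ω i))^2)]
    have h0 : ∀ (b : Xh) (ρ : Fin m → Xh),
        ((∏ i : Fin (m+1), W i ((Fin.cons b ρ : Fin (m+1) → Xh) i))
            * (∑ i : Fin (m+1), f i ((Fin.cons b ρ : Fin (m+1) → Xh) i))^2)
        = (W 0 b * (f 0 b)^2) * (∏ i : Fin m, W i.succ (ρ i))
          + (2 * (W 0 b * f 0 b)) * ((∏ i : Fin m, W i.succ (ρ i)) * (∑ i : Fin m, f i.succ (ρ i)))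
          + W 0 b * ((∏ i : Fin m, W i.succ (ρ i)) * (∑ i : Fin m, f i.succ (ρ i))^2) := by
      intro b ρ; rw [Fin.prod_univ_succ, Fin.sum_univ_succ]
      simp only [Fin.cons_zero, Fin.cons_succ]; ring
    simp_rw [h0, Finset.sum_add_distrib, ← Finset.mul_sum,
      tensor_sum (fun i => W i.succ) (fun i => hW i.succ),
      tensor_mean (fun i => W i.succ) (fun i => f i.succ) (fun i => hW i.succ),
      ih (fun i => W i.succ) (fun i => f i.succ) (fun i => hW i.succ) (fun i => hm i.succ),
      mul_one, ← Finset.sum_mul, hW 0, one_mul]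
    have : ∑ i : Fin m, ∑ b, W i.succ b * f i.succ b = 0 := by
      simp only [hm]; simp
    rw [this, mul_zero]
    simp [Fin.sum_univ_succ, Finset.sum_mul]

lemma chebyshev {n : ℕ} (W f : Fin n → Xh → ℝ)
    (hW0 : ∀ i b, 0 ≤ W i b)
    (t : ℝ) (ht : 0 < t)
    (s : Finset (Fin n → Xh)) (hs : ∀ ω ∈ s, t ≤ |∑ i, f i (ω i)|)
    (htv : (∑ ω : Fin n → Xh, (∏ i, W i (ω i)) * (∑ i, f i (ω i))^2)
      = ∑ i, ∑ b, W i b * (f i b)^2) :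
    ∑ ω ∈ s, ∏ i, W i (ω i) ≤ (∑ i, ∑ b, W i b * (f i b)^2) / t^2 := by
  have hP0 : ∀ ω : Fin n → Xh, 0 ≤ ∏ i, W i (ω i) := fun ω =>
    Finset.prod_nonneg fun i _ => hW0 i (ω i)
  have step1 : ∑ ω ∈ s, ∏ i, W i (ω i)
      ≤ ∑ ω ∈ s, (∏ i, W i (ω i)) * (∑ i, f i (ω i))^2 / t^2 := by
    apply Finset.sum_le_sum
    intro ω hω
    have h1 : t^2 ≤ (∑ i, f i (ω i))^2 := by
      have := hs ω hω
      calc t^2 ≤ |∑ i, f i (ω i)|^2 := by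
            apply pow_le_pow_left₀ ht.le this 2
        _ = (∑ i, f i (ω i))^2 := sq_abs _
    rw [le_div_iff₀ (by positivity)]
    exact mul_le_mul_of_nonneg_left h1 (hP0 ω)
  refine step1.trans ?_
  rw [← Finset.sum_div, ← htv]
  gcongr
  · exact fun ω _ _ => mul_nonneg (hP0 ω) (sq_nonneg _)
  · exact Finset.subset_univ s

lemma jensen_step {Ω : Type*} [Fintype Ω] (s : Finset Ω) (P Q : Ω → ℝ)
    (hP : ∀ ω ∈ s, 0 < P ω) (hQ : ∀ ω ∈ s, 0 < Q ω) {p : ℝ}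
    (hp : p = ∑ ω ∈ s, P ω) (hppos : 0 < p) :
    p * Real.exp ((∑ ω ∈ s, P ω * Real.log (Q ω / P ω)) / p) ≤ ∑ ω ∈ s, Q ω := by
  have hw0 : ∀ ω ∈ s, 0 ≤ P ω / p := fun ω hω => div_nonneg (hP ω hω).le hppos.le
  have hw1 : ∑ ω ∈ s, P ω / p = 1 := by
    rw [← Finset.sum_div, ← hp, div_self hppos.ne']
  have hj := convexOn_exp.map_sum_le hw0 hw1 (fun ω _ => Set.mem_univ (Real.log (Q ω / P ω)))
  have h1 : (∑ ω ∈ s, (P ω / p) • Real.log (Q ω / P ω))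
      = (∑ ω ∈ s, P ω * Real.log (Q ω / P ω)) / p := by
    rw [Finset.sum_div]
    exact Finset.sum_congr rfl fun ω hω => by rw [smul_eq_mul]; ring
  have h2 : (∑ ω ∈ s, (P ω / p) • Real.exp (Real.log (Q ω / P ω)))
      = (∑ ω ∈ s, Q ω) / p := by
    rw [Finset.sum_div]
    refine Finset.sum_congr rfl fun ω hω => ?_
    rw [smul_eq_mul, Real.exp_log (div_pos (hQ ω hω) (hP ω hω)),
      div_mul_div_comm, mul_comm p (P ω), mul_div_mul_left _ _ (hP ω hω).ne']
  rw [h1, h2] at hj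
  calc p * Real.exp ((∑ ω ∈ s, P ω * Real.log (Q ω / P ω)) / p)
      ≤ p * ((∑ ω ∈ s, Q ω) / p) := mul_le_mul_of_nonneg_left hj hppos.le
    _ = ∑ ω ∈ s, Q ω := by field_simp

lemma kl_nonneg {β : Type*} [Fintype β] (p q : β → ℝ)
    (hp0 : ∀ b, 0 ≤ p b) (hq0 : ∀ b, 0 ≤ q b) (hp1 : ∑ b, p b = 1)
    (hq1 : ∑ b, q b ≤ 1) (himp : ∀ b, 0 < p b → 0 < q b) :
    0 ≤ ∑ b, p b * Real.log (p b / q b) := by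
  have key : ∀ b, p b - q b ≤ p b * Real.log (p b / q b) := by
    intro b
    rcases eq_or_lt_of_le (hp0 b) with h | h
    · simp [← h]; exact hq0 b
    · have hqb := himp b h
      have hlog : Real.log (q b / p b) ≤ q b / p b - 1 :=
        Real.log_le_sub_one_of_pos (div_pos hqb h)
      have : 1 - q b / p b ≤ Real.log (p b / q b) := by
        have hlog2 : Real.log (p b / q b) = - Real.log (q b / p b) := by
          rw [← Real.log_inv, inv_div]
        rw [hlog2]; linarith
      calc p b - q b = p b * (1 - q b / p b) := by field_simp
        _ ≤ p b * Real.log (p b / q b) := mul_le_mul_of_nonneg_left this h.le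
  calc (0:ℝ) = 1 - 1 := by ring
    _ ≤ (∑ b, p b) - ∑ b, q b := by rw [hp1]; linarith
    _ = ∑ b, (p b - q b) := (Finset.sum_sub_distrib _ _).symm
    _ ≤ _ := Finset.sum_le_sum fun b _ => key b

lemma ent_le {β : Type*} [Fintype β] (q : β → ℝ)
    (hq0 : ∀ b, 0 ≤ q b) (hq1 : ∑ b, q b = 1) :
    ∑ b, q b * (-Real.log (q b)) ≤ Real.log (Fintype.card β) := by
  have hne : Nonempty β := by
    by_contra h
    rw [not_nonempty_iff] at h
    rw [Finset.univ_eq_empty, Finset.sum_empty] at hq1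
    norm_num at hq1
  have hcard : (0:ℝ) < Fintype.card β := by
    have := Fintype.card_pos_iff.mpr hne
    positivity
  have key : ∀ b, q b * (-Real.log (q b)) - q b * Real.log (Fintype.card β)
      ≤ 1 / (Fintype.card β) - q b := by
    intro b
    rcases eq_or_lt_of_le (hq0 b) with h | h
    · rw [← h]; simp
    · have hlog : Real.log ((q b * Fintype.card β)⁻¹) ≤ (q b * Fintype.card β)⁻¹ - 1 :=
        Real.log_le_sub_one_of_pos (by positivity)
      rw [Real.log_inv] at hlog
      have h2 : -Real.log (q b * Fintype.card β) ≤ (q b * Fintype.card β)⁻¹ - 1 := by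
        linarith
      have h3 : q b * (-Real.log (q b * Fintype.card β))
          ≤ q b * ((q b * Fintype.card β)⁻¹ - 1) :=
        mul_le_mul_of_nonneg_left h2 h.le
      have h4 : q b * ((q b * Fintype.card β)⁻¹ - 1) = 1 / Fintype.card β - q b := by
        field_simp
      rw [Real.log_mul h.ne' hcard.ne'] at h3
      nlinarith [h3, h4]
  have hsum := Finset.sum_le_sum fun b (_ : b ∈ Finset.univ) => key b
  rw [Finset.sum_sub_distrib, Finset.sum_sub_distrib, ← Finset.sum_mul, hq1, one_mul,
    Finset.sum_const, Finset.card_univ, nsmul_eq_mul] at hsum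
  have hc1 : (Fintype.card β : ℝ) * (1 / (Fintype.card β : ℝ)) = 1 := by field_simp
  rw [hc1] at hsum
  linarith

lemma empDist_nonneg {n : ℕ} (x : Fin n → X) (a : X) : 0 ≤ empDist x a := by
  unfold empDist; positivity

lemma card_emp {n : ℕ} (hn : 0 < n) (x : Fin n → X) (a : X) :
    (n : ℝ) * empDist x a = ((Finset.univ.filter (fun i => x i = a)).card : ℝ) := by
  unfold empDist
  have : (n : ℝ) ≠ 0 := by positivity
  field_simp

lemma sum_comp_emp {n : ℕ} (hn : 0 < n) (x : Fin n → X) (g : X → ℝ) :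
    ∑ i, g (x i) = ∑ a, ((n:ℝ) * empDist x a) * g a := by
  have h1 : ∑ a : X, ∑ i ∈ Finset.univ.filter (fun i => x i = a), g a = ∑ i, g (x i) :=
    Finset.sum_fiberwise' Finset.univ x g
  rw [← h1]
  refine Finset.sum_congr rfl fun a _ => ?_
  rw [Finset.sum_const, card_emp hn x a, nsmul_eq_mul]

lemma sum_empDist {n : ℕ} (hn : 0 < n) (x : Fin n → X) : ∑ a, empDist x a = 1 := by
  have h := sum_comp_emp hn x (fun _ => 1)
  simp only [mul_one, Finset.sum_const, Finset.card_univ, Fintype.card_fin, nsmul_eq_mul] at h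
  have h2 : (n:ℝ) * 1 = (n:ℝ) * ∑ a, empDist x a := by
    rw [mul_one, Finset.mul_sum]
    exact h
  exact (mul_left_cancel₀ (by positivity : (n:ℝ) ≠ 0) h2).symm

lemma empDist_pos {n : ℕ} (x : Fin n → X) (i : Fin n) : 0 < empDist x (x i) := by
  unfold empDist
  apply div_pos _ (by exact_mod_cast i.pos)
  have hmem : i ∈ Finset.univ.filter (fun j => x j = x i) := by simp
  exact_mod_cast Finset.card_pos.mpr ⟨i, hmem⟩


lemma num_Ep (A p η c K e : ℝ) (hA0 : 0 ≤ A) (hη0 : 0 ≤ η) (hη2 : η ≤ 1/2)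
    (hpge : 1 - η ≤ p) (hppos : 0 < p) (hηA : η*A ≤ c*K) (hηc : η ≤ c)
    (hmain : 1 + 2*c*K + 2*c ≤ e) : -A - e ≤ -((A+1)/p) := by
  have h1 : (A+1)/p ≤ (A+1)*(1+2*η) := by
    rw [div_le_iff₀ hppos]
    have hq : 1 ≤ (1+2*η)*p := by nlinarith
    nlinarith
  have h2 : (A+1)*(1+2*η) ≤ A + e := by nlinarith
  linarith

lemma num_onetwo (η pv : ℝ) (hη0 : 0 ≤ η) (hpge : 1 - η ≤ pv) : 1 - 2*η ≤ pv := by linarith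

end RDproof

end AuxLemmas


/-- Assume every source letter has a zero-distortion reconstruction, and fix
`0 < δ ≤ D` and `ε > 0`. Then there is a sequence `ε_n → 0` such that for every `n`, every
`x ∈ 𝒳ⁿ`, and every conditional distribution `P*` achieving `R(D−δ, P̂_x)`, the induced
reconstruction distribution `Q(x̂) = Σ_x P̂_x(x) P*(x̂|x)` satisfies
`Σ_{x̂ : d(x,x̂) ≤ nD} Πᵢ Q(x̂ᵢ) ≥ (1 − 2ε_n) 2^{−n[R(D−δ,P̂_x) + ε]}`. -/
theorem induced_reconstruction_ball_lower_bound
    {X Xh : Type*} [Fintype X] [Fintype Xh]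
    (d : X → Xh → ℝ) (hd : ∀ x xh, 0 ≤ d x xh) (D : ℝ)
    (hcover : ∀ x : X, ∃ xh : Xh, d x xh = 0)
    (δ : ℝ) (hδ : 0 < δ) (hδD : δ ≤ D) (ε : ℝ) (hε : 0 < ε) :
    ∃ εseq : ℕ → ℝ, Tendsto εseq atTop (nhds 0) ∧
      ∀ (n : ℕ) (x : Fin n → X) (Pstar : X → Xh → ℝ),
        IsCondPMF Pstar →
        (∑ a, ∑ b, empDist x a * Pstar a b * d a b) ≤ D - δ →
        mutInf2 (empDist x) Pstar = RD d (D - δ) (empDist x) →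
        (1 - 2 * εseq n) * (2 : ℝ) ^ (-(n : ℝ) * (RD d (D - δ) (empDist x) + ε)) ≤
          ∑ xh ∈ Finset.univ.filter (fun xh : Fin n → Xh => dSeq d x xh ≤ (n : ℝ) * D),
            ∏ i, (∑ a, empDist x a * Pstar a (xh i)) := by
  classical
  open RDproof in
  set M : NNReal := Finset.univ.sup (fun q : X × Xh => (⟨d q.1 q.2, hd q.1 q.2⟩ : NNReal)) with hMdef
  have hM : ∀ a b, d a b ≤ (M:ℝ) := by
    intro a b
    have h := Finset.le_sup (f := fun q : X × Xh => (⟨d q.1 q.2, hd q.1 q.2⟩ : NNReal))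
      (Finset.mem_univ (a,b))
    exact_mod_cast h
  set c : ℝ := (M:ℝ)^2/δ^2 with hcdef
  have hc0 : 0 ≤ c := by positivity
  set K : ℝ := Real.log ((max 1 (Fintype.card Xh) : ℕ) : ℝ) with hKdef
  have hK0 : 0 ≤ K := by
    apply Real.log_nonneg
    exact_mod_cast Nat.le_max_left 1 (Fintype.card Xh)
  have hεlog : 0 < ε * Real.log 2 := mul_pos hε (Real.log_pos one_lt_two)
  obtain ⟨N₀, hN₀⟩ := exists_nat_ge ((1 + 2*c*K + 2*c)/(ε*Real.log 2))
  obtain ⟨N₁, hN₁⟩ := exists_nat_ge (2*c)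
  set N : ℕ := max 1 (max N₀ N₁) + 1 with hNdef
  refine ⟨fun m => if m < N then 1 else c/m, ?_, ?_⟩
  · refine Filter.Tendsto.congr' ?_ (tendsto_const_div_atTop_nhds_zero_nat c)
    filter_upwards [eventually_ge_atTop N] with m hm
    rw [if_neg (Nat.not_lt.mpr hm)]
  · intro n x Pstar hPMF hdist hach
    by_cases hnN : n < N
    · simp only [if_pos hnN]
      have hpow : (0:ℝ) < (2:ℝ) ^ (-(n:ℝ) * (RD d (D-δ) (empDist x) + ε)) :=
        Real.rpow_pos_of_pos (by norm_num) _
      have hRHS : (0:ℝ) ≤ ∑ xh ∈ Finset.univ.filter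
          (fun xh : Fin n → Xh => dSeq d x xh ≤ (n:ℝ)*D),
          ∏ i, (∑ a, empDist x a * Pstar a (xh i)) :=
        Finset.sum_nonneg fun xh _ => Finset.prod_nonneg fun i _ =>
          Finset.sum_nonneg fun a _ => mul_nonneg (RDproof.empDist_nonneg x a)
            ((hPMF a).1 (xh i))
      nlinarith [hpow, hRHS]
    · push_neg at hnN
      have hN1 : 0 < N := Nat.succ_pos _
      have hn0 : 0 < n := lt_of_lt_of_le hN1 hnN
      have hnR : (0:ℝ) < n := by exact_mod_cast hn0
      have hite : (fun m => if m < N then (1:ℝ) else c/(m:ℝ)) n = c/(n:ℝ) := by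
        simp [Nat.not_lt.mpr hnN]
      rw [hite, ← hach]
      -- numeric consequences of n ≥ N
      have hnN' : ((max 1 (max N₀ N₁) : ℕ) : ℝ) ≤ (n:ℝ) := by
        exact_mod_cast le_trans (Nat.le_succ _) hnN
      have hnN₀ : (N₀:ℝ) ≤ (n:ℝ) := by
        refine le_trans ?_ hnN'
        exact_mod_cast le_trans (Nat.le_max_left N₀ N₁) (Nat.le_max_right 1 _)
      have hnN₁ : (N₁:ℝ) ≤ (n:ℝ) := by
        refine le_trans ?_ hnN'
        exact_mod_cast le_trans (Nat.le_max_right N₀ N₁) (Nat.le_max_right 1 _)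
      have hmain_n : 1 + 2*c*K + 2*c ≤ (n:ℝ) * (ε * Real.log 2) := by
        have h := le_trans hN₀ hnN₀
        rw [div_le_iff₀ hεlog] at h
        linarith
      have hη2 : c/(n:ℝ) ≤ 1/2 := by
        rw [div_le_div_iff₀ hnR (by norm_num : (0:ℝ) < 2)]
        have := le_trans hN₁ hnN₁
        linarith
      have hη0 : 0 ≤ c/(n:ℝ) := by positivity
      have hηc : c/(n:ℝ) ≤ c := div_le_self hc0 (by exact_mod_cast hn0)
      have hcn : (c/(n:ℝ)) * n = c := div_mul_cancel₀ c hnR.ne'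
      -- distributions
      have hW0 : ∀ (i : Fin n) b, 0 ≤ Pstar (x i) b := fun i b => (hPMF (x i)).1 b
      have hW1 : ∀ i : Fin n, ∑ b, Pstar (x i) b = 1 := fun i => (hPMF (x i)).2
      set Q1 : Xh → ℝ := fun b => ∑ a, empDist x a * Pstar a b with hQ1def
      have hQ10 : ∀ b, 0 ≤ Q1 b := fun b => Finset.sum_nonneg fun a _ =>
        mul_nonneg (RDproof.empDist_nonneg x a) ((hPMF a).1 b)
      have hQ1sum : ∑ b, Q1 b = 1 := by
        simp only [hQ1def]
        rw [Finset.sum_comm]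
        calc ∑ a, ∑ b, empDist x a * Pstar a b
            = ∑ a, empDist x a := by
              refine Finset.sum_congr rfl fun a _ => ?_
              rw [← Finset.mul_sum, (hPMF a).2, mul_one]
          _ = 1 := RDproof.sum_empDist hn0 x
      have hQ1pos : ∀ a b, 0 < empDist x a → 0 < Pstar a b → 0 < Q1 b := by
        intro a b ha hb
        have hle : empDist x a * Pstar a b ≤ Q1 b :=
          Finset.single_le_sum (f := fun a' => empDist x a' * Pstar a' b)
            (fun a' _ => mul_nonneg (RDproof.empDist_nonneg x a') ((hPMF a').1 b))
            (Finset.mem_univ a)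
        exact lt_of_lt_of_le (mul_pos ha hb) hle
      have hXhne : Nonempty Xh := (hcover (x ⟨0, hn0⟩)).elim fun b _ => ⟨b⟩
      have hcardXh : 1 ≤ Fintype.card Xh := Fintype.card_pos_iff.mpr hXhne
      have hKeq : K = Real.log (Fintype.card Xh) := by
        rw [hKdef, max_eq_right hcardXh]
      -- product measures
      set Pw : (Fin n → Xh) → ℝ := fun ω => ∏ i, Pstar (x i) (ω i) with hPwdef
      set Qw : (Fin n → Xh) → ℝ := fun ω => ∏ i, Q1 (ω i) with hQwdef
      have hPw0 : ∀ ω, 0 ≤ Pw ω := fun ω => Finset.prod_nonneg fun i _ => hW0 i (ω i)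
      have hQw0 : ∀ ω, 0 ≤ Qw ω := fun ω => Finset.prod_nonneg fun i _ => hQ10 (ω i)
      have hPwsum : ∑ ω : Fin n → Xh, Pw ω = 1 := RDproof.tensor_sum (fun i => Pstar (x i)) hW1
      have hQwsum : ∑ ω : Fin n → Xh, Qw ω = 1 :=
        RDproof.tensor_sum (fun _ => Q1) (fun _ => hQ1sum)
      have hfac : ∀ ω : Fin n → Xh, 0 < Pw ω → ∀ i, 0 < Pstar (x i) (ω i) := by
        intro ω h i
        rcases (hW0 i (ω i)).lt_or_eq with h' | h'
        · exact h'
        · exfalso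
          have hz : Pw ω = 0 := Finset.prod_eq_zero (Finset.mem_univ i) h'.symm
          rw [hz] at h; exact lt_irrefl 0 h
      have hQwpos : ∀ ω : Fin n → Xh, 0 < Pw ω → 0 < Qw ω := by
        intro ω h
        exact Finset.prod_pos fun i _ =>
          hQ1pos (x i) (ω i) (RDproof.empDist_pos x i) (hfac ω h i)
      -- distortion ball and its complement
      set B : Finset (Fin n → Xh) :=
        Finset.univ.filter (fun xh : Fin n → Xh => dSeq d x xh ≤ (n:ℝ)*D) with hBdef
      set Bc : Finset (Fin n → Xh) :=
        Finset.univ.filter (fun xh : Fin n → Xh => ¬ (dSeq d x xh ≤ (n:ℝ)*D)) with hBcdef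
      set μ : Fin n → ℝ := fun i => ∑ b, Pstar (x i) b * d (x i) b with hμdef
      set f : Fin n → Xh → ℝ := fun i b => d (x i) b - μ i with hfdef
      have hmean : ∀ i, ∑ b, Pstar (x i) b * f i b = 0 := by
        intro i
        simp only [hfdef, mul_sub]
        rw [Finset.sum_sub_distrib, ← Finset.sum_mul, hW1 i, one_mul]
        simp [hμdef]
      have hvar : ∀ i, ∑ b, Pstar (x i) b * (f i b)^2 ≤ (M:ℝ)^2 := by
        intro i
        have hμ0 : 0 ≤ μ i := by
          rw [hμdef]
          exact Finset.sum_nonneg fun b _ => mul_nonneg (hW0 i b) (hd _ b)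
        have hμM : μ i ≤ (M:ℝ) := by
          rw [hμdef]
          calc ∑ b, Pstar (x i) b * d (x i) b ≤ ∑ b, Pstar (x i) b * (M:ℝ) :=
                Finset.sum_le_sum fun b _ => mul_le_mul_of_nonneg_left (hM _ b) (hW0 i b)
            _ = (M:ℝ) := by rw [← Finset.sum_mul, hW1 i, one_mul]
        calc ∑ b, Pstar (x i) b * (f i b)^2
            ≤ ∑ b, Pstar (x i) b * (M:ℝ)^2 := by
              refine Finset.sum_le_sum fun b _ => ?_
              refine mul_le_mul_of_nonneg_left ?_ (hW0 i b)
              have h1 := hd (x i) b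
              have h2 := hM (x i) b
              apply sq_le_sq'
              · simp only [hfdef]; linarith
              · simp only [hfdef]; linarith
          _ = (M:ℝ)^2 := by rw [← Finset.sum_mul, hW1 i, one_mul]
      have hsumμ : ∑ i, μ i ≤ (n:ℝ) * (D - δ) := by
        have hgrp := RDproof.sum_comp_emp hn0 x (fun a => ∑ b, Pstar a b * d a b)
        calc ∑ i, μ i = ∑ a, ((n:ℝ) * empDist x a) * ∑ b, Pstar a b * d a b := hgrp
          _ = (n:ℝ) * ∑ a, ∑ b, empDist x a * Pstar a b * d a b := by
              rw [Finset.mul_sum]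
              refine Finset.sum_congr rfl fun a _ => ?_
              rw [Finset.mul_sum, Finset.mul_sum]
              exact Finset.sum_congr rfl fun b _ => by ring
          _ ≤ (n:ℝ) * (D - δ) := mul_le_mul_of_nonneg_left hdist hnR.le
      have hcheb : ∑ ω ∈ Bc, Pw ω ≤ c/(n:ℝ) := by
        have htv := RDproof.tensor_var (fun i => Pstar (x i)) f hW1 hmean
        have hs : ∀ ω ∈ Bc, (n:ℝ)*δ ≤ |∑ i, f i (ω i)| := by
          intro ω hω
          rw [hBcdef, Finset.mem_filter] at hω
          have hgt : (n:ℝ)*D < dSeq d x ω := lt_of_not_ge hω.2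
          have hsum : ∑ i, f i (ω i) = dSeq d x ω - ∑ i, μ i := by
            simp only [hfdef, dSeq]
            rw [Finset.sum_sub_distrib]
          have hexp : (n:ℝ)*(D-δ) = (n:ℝ)*D - (n:ℝ)*δ := by ring
          have hle : (n:ℝ)*δ ≤ ∑ i, f i (ω i) := by
            rw [hsum]; linarith [hgt, hsumμ]
          exact le_trans hle (le_abs_self _)
        have hch := RDproof.chebyshev (fun i => Pstar (x i)) f hW0 ((n:ℝ)*δ)
          (by positivity) Bc hs htv
        have hvtot : ∑ i, ∑ b, Pstar (x i) b * (f i b)^2 ≤ (n:ℝ) * (M:ℝ)^2 := by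
          calc ∑ i, ∑ b, Pstar (x i) b * (f i b)^2 ≤ ∑ _i : Fin n, (M:ℝ)^2 :=
                Finset.sum_le_sum fun i _ => hvar i
            _ = (n:ℝ)*(M:ℝ)^2 := by
                rw [Finset.sum_const, Finset.card_univ, Fintype.card_fin, nsmul_eq_mul]
        calc ∑ ω ∈ Bc, Pw ω
            ≤ (∑ i, ∑ b, Pstar (x i) b * (f i b)^2) / ((n:ℝ)*δ)^2 := hch
          _ ≤ ((n:ℝ)*(M:ℝ)^2) / ((n:ℝ)*δ)^2 := by gcongr
          _ = c/(n:ℝ) := by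
              rw [hcdef]
              field_simp
      set B' : Finset (Fin n → Xh) := B.filter (fun ω => 0 < Pw ω) with hB'def
      set p : ℝ := ∑ ω ∈ B', Pw ω with hpdef
      have hpB : p = ∑ ω ∈ B, Pw ω := by
        rw [hpdef, hB'def]
        rw [← Finset.sum_filter_add_sum_filter_not B (fun ω => 0 < Pw ω) Pw]
        have hzero : ∑ ω ∈ B.filter (fun ω => ¬ 0 < Pw ω), Pw ω = 0 :=
          Finset.sum_eq_zero fun ω hω =>
            le_antisymm (not_lt.mp (Finset.mem_filter.mp hω).2) (hPw0 ω)
        rw [hzero, add_zero]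
      have hBB : ∑ ω ∈ B, Pw ω + ∑ ω ∈ Bc, Pw ω = 1 := by
        rw [← hPwsum, hBdef, hBcdef]
        exact Finset.sum_filter_add_sum_filter_not Finset.univ _ Pw
      have hpge : 1 - c/(n:ℝ) ≤ p := by rw [hpB]; linarith [hcheb, hBB]
      have hppos : 0 < p := by linarith [hpge, hη2]
      -- KL quantities
      set A : ℝ := ∑ i, ∑ b, Pstar (x i) b * Real.log (Pstar (x i) b / Q1 b) with hAdef
      have hA0 : 0 ≤ A := by
        rw [hAdef]
        refine Finset.sum_nonneg fun i _ => ?_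
        exact RDproof.kl_nonneg (Pstar (x i)) Q1 (hW0 i) hQ10 (hW1 i) (le_of_eq hQ1sum)
          (fun b hb => hQ1pos (x i) b (RDproof.empDist_pos x i) hb)
      have hAR : A = (n:ℝ) * Real.log 2 * mutInf2 (empDist x) Pstar := by
        have hgrp := RDproof.sum_comp_emp hn0 x
          (fun a => ∑ b, Pstar a b * Real.log (Pstar a b / Q1 b))
        rw [hAdef]
        calc ∑ i, ∑ b, Pstar (x i) b * Real.log (Pstar (x i) b / Q1 b)
            = ∑ a, ((n:ℝ) * empDist x a) * ∑ b, Pstar a b * Real.log (Pstar a b / Q1 b) := hgrp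
          _ = (n:ℝ) * Real.log 2 * mutInf2 (empDist x) Pstar := by
              simp only [mutInf2, Real.logb]
              rw [Finset.mul_sum]
              refine Finset.sum_congr rfl fun a _ => ?_
              rw [Finset.mul_sum, Finset.mul_sum]
              refine Finset.sum_congr rfl fun b _ => ?_
              have hden : (∑ a', empDist x a' * Pstar a' b) = Q1 b := by
                simp only [hQ1def]
              rw [hden]
              have hl2 : Real.log 2 ≠ 0 := ne_of_gt (Real.log_pos one_lt_two)
              field_simp
      have hAup : A ≤ (n:ℝ) * K := by
        rw [hKeq]
        have hgrp := RDproof.sum_comp_emp hn0 x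
          (fun a => ∑ b, Pstar a b * Real.log (Pstar a b / Q1 b))
        have step1 : ∀ a b, (empDist x a) * (Pstar a b * Real.log (Pstar a b / Q1 b))
            ≤ (empDist x a * Pstar a b) * (-Real.log (Q1 b)) := by
          intro a b
          rcases eq_or_lt_of_le (RDproof.empDist_nonneg x a) with ha | ha
          · rw [← ha]; simp
          · rcases eq_or_lt_of_le ((hPMF a).1 b) with hb | hb
            · rw [← hb]; simp
            · have hq := hQ1pos a b ha hb
              have hP1 : Pstar a b ≤ 1 := by
                have hle := Finset.single_le_sum (f := Pstar a)
                  (fun b' _ => (hPMF a).1 b') (Finset.mem_univ b)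
                rw [(hPMF a).2] at hle
                exact hle
              have hlog : Real.log (Pstar a b / Q1 b) ≤ -Real.log (Q1 b) := by
                rw [← Real.log_inv]
                apply Real.log_le_log (div_pos hb hq)
                rw [div_le_iff₀ hq, inv_mul_cancel₀ hq.ne']
                exact hP1
              calc (empDist x a) * (Pstar a b * Real.log (Pstar a b / Q1 b))
                  = (empDist x a * Pstar a b) * Real.log (Pstar a b / Q1 b) := by ring
                _ ≤ (empDist x a * Pstar a b) * (-Real.log (Q1 b)) :=
                    mul_le_mul_of_nonneg_left hlog (mul_nonneg ha.le hb.le)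
        calc A = ∑ a, ((n:ℝ)*empDist x a) * ∑ b, Pstar a b * Real.log (Pstar a b / Q1 b) := by
              rw [hAdef]; exact hgrp
          _ = (n:ℝ) * ∑ a, ∑ b, empDist x a * (Pstar a b * Real.log (Pstar a b / Q1 b)) := by
              rw [Finset.mul_sum]
              refine Finset.sum_congr rfl fun a _ => ?_
              rw [Finset.mul_sum, Finset.mul_sum]
              exact Finset.sum_congr rfl fun b _ => by ring
          _ ≤ (n:ℝ) * ∑ a, ∑ b, (empDist x a * Pstar a b) * (-Real.log (Q1 b)) := by
              refine mul_le_mul_of_nonneg_left ?_ hnR.le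
              exact Finset.sum_le_sum fun a _ => Finset.sum_le_sum fun b _ => step1 a b
          _ = (n:ℝ) * ∑ b, Q1 b * (-Real.log (Q1 b)) := by
              congr 1
              rw [Finset.sum_comm]
              refine Finset.sum_congr rfl fun b _ => ?_
              rw [← Finset.sum_mul]
          _ ≤ (n:ℝ) * Real.log (Fintype.card Xh) := by
              refine mul_le_mul_of_nonneg_left ?_ hnR.le
              exact RDproof.ent_le Q1 hQ10 hQ1sum
      -- identify A with the sum over positive-probability sequences
      set allP : Finset (Fin n → Xh) := Finset.univ.filter (fun ω => 0 < Pw ω) with hallPdef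
      have hAform : ∑ ω ∈ allP, Pw ω * Real.log (Pw ω / Qw ω) = A := by
        have htm := RDproof.tensor_mean (fun i => Pstar (x i))
          (fun i b => Real.log (Pstar (x i) b / Q1 b)) hW1
        have huniv : ∑ ω : Fin n → Xh,
            Pw ω * (∑ i, Real.log (Pstar (x i) (ω i) / Q1 (ω i))) = A := by
          rw [hAdef]; exact htm
        calc ∑ ω ∈ allP, Pw ω * Real.log (Pw ω / Qw ω)
            = ∑ ω ∈ allP, Pw ω * (∑ i, Real.log (Pstar (x i) (ω i) / Q1 (ω i))) := by
              refine Finset.sum_congr rfl fun ω hω => ?_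
              have hPpos : 0 < Pw ω := by
                rw [hallPdef, Finset.mem_filter] at hω
                exact hω.2
              congr 1
              have hfpos : ∀ i, 0 < Pstar (x i) (ω i) := hfac ω hPpos
              have hqpos : ∀ i : Fin n, 0 < Q1 (ω i) := fun i =>
                hQ1pos (x i) (ω i) (RDproof.empDist_pos x i) (hfpos i)
              rw [hPwdef, hQwdef]
              rw [← Finset.prod_div_distrib, Real.log_prod]
              intro i _
              exact div_ne_zero (hfpos i).ne' (hqpos i).ne'
          _ = ∑ ω : Fin n → Xh, Pw ω * (∑ i, Real.log (Pstar (x i) (ω i) / Q1 (ω i))) := by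
              rw [hallPdef]
              refine Finset.sum_filter_of_ne fun ω _ hne => ?_
              rcases (hPw0 ω).lt_or_eq with h | h
              · exact h
              · exact absurd (by rw [← h, zero_mul]) hne
          _ = A := huniv
      have hTall : ∑ ω ∈ allP, Pw ω * Real.log (Qw ω / Pw ω) = -A := by
        rw [← hAform, ← Finset.sum_neg_distrib]
        refine Finset.sum_congr rfl fun ω hω => ?_
        have hPpos : 0 < Pw ω := by
          rw [hallPdef, Finset.mem_filter] at hω
          exact hω.2
        have hQpos : 0 < Qw ω := hQwpos ω hPpos
        have hli : Real.log (Qw ω / Pw ω) = - Real.log (Pw ω / Qw ω) := by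
          rw [← Real.log_inv, inv_div]
        rw [hli]; ring
      have hB'sub : B' ⊆ allP := by
        intro ω hω
        rw [hB'def, Finset.mem_filter] at hω
        rw [hallPdef, Finset.mem_filter]
        exact ⟨Finset.mem_univ ω, hω.2⟩
      have hrest : ∑ ω ∈ allP \ B', Pw ω * Real.log (Qw ω / Pw ω) ≤ 1 := by
        have step : ∀ ω ∈ allP \ B', Pw ω * Real.log (Qw ω / Pw ω) ≤ Qw ω := by
          intro ω hω
          have hωP : ω ∈ allP := (Finset.mem_sdiff.mp hω).1
          have hPpos : 0 < Pw ω := by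
            rw [hallPdef, Finset.mem_filter] at hωP
            exact hωP.2
          have hQpos : 0 < Qw ω := hQwpos ω hPpos
          have hlog : Real.log (Qw ω / Pw ω) ≤ Qw ω / Pw ω - 1 :=
            Real.log_le_sub_one_of_pos (div_pos hQpos hPpos)
          calc Pw ω * Real.log (Qw ω / Pw ω) ≤ Pw ω * (Qw ω / Pw ω - 1) :=
                mul_le_mul_of_nonneg_left hlog hPpos.le
            _ = Qw ω - Pw ω := by field_simp
            _ ≤ Qw ω := by linarith [hPpos.le]
        calc ∑ ω ∈ allP \ B', Pw ω * Real.log (Qw ω / Pw ω)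
            ≤ ∑ ω ∈ allP \ B', Qw ω := Finset.sum_le_sum step
          _ ≤ ∑ ω : Fin n → Xh, Qw ω :=
              Finset.sum_le_sum_of_subset_of_nonneg (Finset.subset_univ _)
                (fun ω _ _ => hQw0 ω)
          _ = 1 := hQwsum
      have hsplit : ∑ ω ∈ allP \ B', Pw ω * Real.log (Qw ω / Pw ω)
          + ∑ ω ∈ B', Pw ω * Real.log (Qw ω / Pw ω) = -A := by
        rw [Finset.sum_sdiff hB'sub]; exact hTall
      have hT' : -A - 1 ≤ ∑ ω ∈ B', Pw ω * Real.log (Qw ω / Pw ω) := by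
        linarith [hsplit, hrest]
      -- Jensen
      have hJ : p * Real.exp ((∑ ω ∈ B', Pw ω * Real.log (Qw ω / Pw ω)) / p)
          ≤ ∑ ω ∈ B', Qw ω := by
        refine RDproof.jensen_step B' Pw Qw ?_ ?_ hpdef hppos
        · intro ω hω
          rw [hB'def, Finset.mem_filter] at hω
          exact hω.2
        · intro ω hω
          rw [hB'def, Finset.mem_filter] at hω
          exact hQwpos ω hω.2
      -- rpow to exp
      have hAR' : (n:ℝ) * mutInf2 (empDist x) Pstar * Real.log 2 = A := by rw [hAR]; ring
      have hrpow : (2:ℝ) ^ (-(n:ℝ) * (mutInf2 (empDist x) Pstar + ε))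
          = Real.exp (-A - (n:ℝ) * ε * Real.log 2) := by
        rw [Real.rpow_def_of_pos (by norm_num : (0:ℝ) < 2)]
        congr 1
        rw [← hAR']
        ring
      -- final numeric chain
      set η : ℝ := c/(n:ℝ) with hηdef
      clear_value Q1 Pw Qw B Bc μ f B' p A allP η
      clear hAform hTall hsplit hrest hBB hpB hcheb hmean hvar hsumμ hPwsum hQwsum
        hQ1sum hQ10 hQ1pos hfac hW0 hW1 hdist hAR hB'sub hM hite hach
      have hηA : η * A ≤ c * K := by
        calc η*A ≤ η*((n:ℝ)*K) := mul_le_mul_of_nonneg_left hAup hη0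
          _ = (η*(n:ℝ))*K := by ring
          _ = c*K := by rw [hcn]
      have hmainE : 1 + 2*c*K + 2*c ≤ (n:ℝ)*ε*Real.log 2 := by
        calc 1 + 2*c*K + 2*c ≤ (n:ℝ)*(ε*Real.log 2) := hmain_n
          _ = (n:ℝ)*ε*Real.log 2 := by ring
      have hEp : -A - (n:ℝ)*ε*Real.log 2 ≤ -((A+1)/p) :=
        RDproof.num_Ep A p η c K ((n:ℝ)*ε*Real.log 2) hA0 hη0 hη2 hpge hppos hηA hηc hmainE
      have hfinal1 : (1 - 2*η) * Real.exp (-A - (n:ℝ)*ε*Real.log 2)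
          ≤ p * Real.exp ((∑ ω ∈ B', Pw ω * Real.log (Qw ω / Pw ω)) / p) := by
        have e1 : Real.exp (-A - (n:ℝ)*ε*Real.log 2) ≤ Real.exp (-((A+1)/p)) :=
          Real.exp_le_exp.mpr hEp
        have e2 : Real.exp (-((A+1)/p))
            ≤ Real.exp ((∑ ω ∈ B', Pw ω * Real.log (Qw ω / Pw ω)) / p) := by
          apply Real.exp_le_exp.mpr
          have hne : -((A+1)/p) = (-A-1)/p := by ring
          rw [hne]
          exact (div_le_div_iff_of_pos_right hppos).mpr hT'
        have hp12 : (1:ℝ) - 2*η ≤ p := RDproof.num_onetwo η p hη0 hpge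
        have hexp0 : 0 ≤ Real.exp (-A - (n:ℝ)*ε*Real.log 2) := (Real.exp_pos _).le
        calc (1-2*η) * Real.exp (-A - (n:ℝ)*ε*Real.log 2)
            ≤ p * Real.exp (-A - (n:ℝ)*ε*Real.log 2) :=
              mul_le_mul_of_nonneg_right hp12 hexp0
          _ ≤ p * Real.exp ((∑ ω ∈ B', Pw ω * Real.log (Qw ω / Pw ω)) / p) := by
              refine mul_le_mul_of_nonneg_left ?_ hppos.le
              exact le_trans e1 e2
      have hsubB : ∑ ω ∈ B', Qw ω ≤ ∑ ω ∈ B, Qw ω := by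
        apply Finset.sum_le_sum_of_subset_of_nonneg
        · rw [hB'def]; exact Finset.filter_subset _ B
        · exact fun ω _ _ => hQw0 ω
      calc (1 - 2*η) * (2:ℝ) ^ (-(n:ℝ) * (mutInf2 (empDist x) Pstar + ε))
          = (1-2*η) * Real.exp (-A - (n:ℝ)*ε*Real.log 2) := by rw [hrpow]
        _ ≤ p * Real.exp ((∑ ω ∈ B', Pw ω * Real.log (Qw ω / Pw ω)) / p) := hfinal1
        _ ≤ ∑ ω ∈ B', Qw ω := hJ
        _ ≤ ∑ ω ∈ B, Qw ω := hsubB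
end
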